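/- arXiv:cs/0402033 — 3 statements merged into one kernel-verified Lean document; each statement's English description precedes it below -/
import Mathlib

section
/- Soundness of goal rewrite systems: let P be a finite normal program and ⟨Q_L, R_P, →⟩ a goal rewrite system for P. For any literal g and any rewrite sequence g →* T(C₁) ∨ … ∨ T(C_m), there exists, for each i ∈ [1..m], a partial stable model Mᵢ of P such that g ∈ Cᵢ ⊆ Mᵢ. -/
/-- A rule `a ← b₁,…,b_m, not c₁,…,not c_n` of a normal logic program. -/
structure PRule (α : Type) where
  head : α
  pos : List α
  neg : List α

/-- `Derives P S a` formalizes `P ∪ S ⊢ a`: standard propositional derivation of the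
atom `a` from the program `P` together with the set `S` of default negations
(each default negation `not c` treated as a named atom, identified with `c ∈ S`). -/
inductive Derives {α : Type} (P : List (PRule α)) (S : Set α) : α → Prop
  | step (r : PRule α) (hr : r ∈ P)
      (hpos : ∀ b ∈ r.pos, Derives P S b)
      (hneg : ∀ c ∈ r.neg, c ∈ S) :
      Derives P S r.head

/-- `F_P(S) = { not a | P ∪ S ⊬ a }`, a set of default negations identified with atoms. -/
def FPop {α : Type} (P : List (PRule α)) (S : Set α) : Set α :=
  {a | ¬ Derives P S a}

/-- Literals: an atom or its negation. -/
inductive Lit (α : Type) where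
  | pos : α → Lit α
  | neg : α → Lit α
  deriving DecidableEq

namespace Lit
def atom {α : Type} : Lit α → α
  | .pos a => a
  | .neg a => a
def compl {α : Type} : Lit α → Lit α
  | .pos a => .neg a
  | .neg a => .pos a
def isPos {α : Type} : Lit α → Prop
  | .pos _ => True
  | .neg _ => False
def isNeg {α : Type} : Lit α → Prop
  | .pos _ => False
  | .neg _ => True
end Lit

/-- The partial stable model determined by a set `S` of default negations:
`¬ξ ∈ M` iff `not ξ ∈ S`, and `ξ ∈ M` iff `P ∪ S ⊢ ξ`. -/
def modelOf {α : Type} (P : List (PRule α)) (S : Set α) : Set (Lit α) :=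
  {l | ∃ a, (l = Lit.neg a ∧ a ∈ S) ∨ (l = Lit.pos a ∧ Derives P S a)}

/-- `M` is a partial stable model of `P`: it is determined by some `S` with
`F_P²(S) = S` and `S ⊆ F_P(S)`. -/
def IsPSM {α : Type} (P : List (PRule α)) (M : Set (Lit α)) : Prop :=
  ∃ S : Set α, FPop P (FPop P S) = S ∧ S ⊆ FPop P S ∧ M = modelOf P S

/-- A set of literals is consistent if it contains no complementary pair. -/
def ConsistentSet {α : Type} (C : Set (Lit α)) : Prop :=
  ∀ a : α, ¬ (Lit.pos a ∈ C ∧ Lit.neg a ∈ C)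

/-- Goal formulas: `F`, `T(C)` (with context `C`), literals annotated with the list of
their strict ancestors on the rewrite chain leading to them, conjunction and disjunction. -/
inductive GGoal (α : Type) where
  | F : GGoal α
  | T : Set (Lit α) → GGoal α
  | lit : Lit α → List (Lit α) → GGoal α
  | and : GGoal α → GGoal α → GGoal α
  | or : GGoal α → GGoal α → GGoal α

/-- A positive loop: equal atom endpoints and all literals on the chain atoms. -/
def PosLoop {α : Type} (seg : List (Lit α)) : Prop :=
  2 ≤ seg.length ∧ seg.head? = seg.getLast? ∧ ∀ x ∈ seg, x.isPos

/-- A negative loop: equal negative-literal endpoints and all literals negative. -/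
def NegLoop {α : Type} (seg : List (Lit α)) : Prop :=
  2 ≤ seg.length ∧ seg.head? = seg.getLast? ∧ ∀ x ∈ seg, x.isNeg

/-- An odd loop: complementary endpoint literals. -/
def OddLoop {α : Type} (seg : List (Lit α)) : Prop :=
  2 ≤ seg.length ∧ seg.getLast?.map Lit.compl = seg.head?

/-- An even loop: equal endpoints, neither a positive nor a negative loop. -/
def EvenLoop {α : Type} (seg : List (Lit α)) : Prop :=
  2 ≤ seg.length ∧ seg.head? = seg.getLast? ∧ ¬ PosLoop seg ∧ ¬ NegLoop seg

/-- The chain `c` ends with a failing loop: some suffix `gᵢ ≺⁺ lₙ` is a positive or odd loop. -/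
def FailLoopChain {α : Type} (c : List (Lit α)) : Prop :=
  ∃ seg, seg <:+ c ∧ (PosLoop seg ∨ OddLoop seg)

/-- The chain `c` ends with a succeeding loop: some suffix is a negative or even loop. -/
def SuccLoopChain {α : Type} (c : List (Lit α)) : Prop :=
  ∃ seg, seg <:+ c ∧ (NegLoop seg ∨ EvenLoop seg)

/-- The last literal of the chain `c` is a loop literal. -/
def LoopChain {α : Type} (c : List (Lit α)) : Prop := FailLoopChain c ∨ SuccLoopChain c

/-- The literals of the body of a rule (default negations as negative literals). -/
def bodyLits {α : Type} (r : PRule α) : List (Lit α) :=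
  r.pos.map Lit.pos ++ r.neg.map Lit.neg

/-- The rules of `P` with head `a` (giving the completed definition of `a`). -/
def rulesFor {α : Type} [DecidableEq α] (P : List (PRule α)) (a : α) : List (PRule α) :=
  P.filter (fun r => r.head = a)

/-- Disjunction of a list of goals (`F` if the list is empty). -/
def disjList {α : Type} : List (GGoal α) → GGoal α
  | [] => GGoal.F
  | [g] => g
  | g :: gs => GGoal.or g (disjList gs)

/-- Conjunction of a list of goals; an empty conjunction (empty body, or `¬F`)
is `T(C)` where `C` is the set of literals on the rewrite chain `anc`. -/
def conjList {α : Type} (anc : List (Lit α)) : List (GGoal α) → GGoal α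
  | [] => GGoal.T {x | x ∈ anc}
  | [g] => g
  | g :: gs => GGoal.and g (conjList anc gs)

/-- Program rule for a positive literal: `φ` rewrites to `B₁ ∨ … ∨ Bₙ`, where the `Bᵢ`
are the bodies of the rules with head `φ`; each new literal records the chain `anc`. -/
def posExp {α : Type} [DecidableEq α] (P : List (PRule α)) (anc : List (Lit α)) (a : α) : GGoal α :=
  disjList ((rulesFor P a).map
    (fun r => conjList anc ((bodyLits r).map (fun l => GGoal.lit l anc))))

/-- Program rule for a negative literal: `¬φ` rewrites to `¬B₁ ∧ … ∧ ¬Bₙ`,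
where `¬Bᵢ` is the disjunction of the complements of the literals of `Bᵢ`. -/
def negExp {α : Type} [DecidableEq α] (P : List (PRule α)) (anc : List (Lit α)) (a : α) : GGoal α :=
  conjList anc ((rulesFor P a).map
    (fun r => disjList ((bodyLits r).map (fun l => GGoal.lit l.compl anc))))

/-- One rewrite step of the goal rewrite system `⟨Q_L, R_P, →⟩` for `P`:
program rules (at non-loop literals), simplification rules SR1–SR5',
loop rules LR1 and LR2, applied anywhere inside a goal. -/
inductive GStep {α : Type} [DecidableEq α] (P : List (PRule α)) : GGoal α → GGoal α → Prop
  | litPos (a : α) (anc : List (Lit α)) (h : ¬ LoopChain (anc ++ [Lit.pos a])) :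
      GStep P (.lit (.pos a) anc) (posExp P (anc ++ [Lit.pos a]) a)
  | litNeg (a : α) (anc : List (Lit α)) (h : ¬ LoopChain (anc ++ [Lit.neg a])) :
      GStep P (.lit (.neg a) anc) (negExp P (anc ++ [Lit.neg a]) a)
  | lr1 (l : Lit α) (anc : List (Lit α)) (h : FailLoopChain (anc ++ [l])) :
      GStep P (.lit l anc) .F
  | lr2 (l : Lit α) (anc : List (Lit α)) (h : SuccLoopChain (anc ++ [l])) :
      GStep P (.lit l anc) (.T {x | x ∈ anc ++ [l]})
  | sr1 (g : GGoal α) : GStep P (.or .F g) g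
  | sr1' (g : GGoal α) : GStep P (.or g .F) g
  | sr2 (g : GGoal α) : GStep P (.and .F g) .F
  | sr2' (g : GGoal α) : GStep P (.and g .F) .F
  | sr3 (C₁ C₂ : Set (Lit α)) (h : ConsistentSet (C₁ ∪ C₂)) :
      GStep P (.and (.T C₁) (.T C₂)) (.T (C₁ ∪ C₂))
  | sr4 (C₁ C₂ : Set (Lit α)) (h : ¬ ConsistentSet (C₁ ∪ C₂)) :
      GStep P (.and (.T C₁) (.T C₂)) .F
  | sr5 (g₁ g₂ g₃ : GGoal α) :
      GStep P (.and g₁ (.or g₂ g₃)) (.or (.and g₁ g₂) (.and g₁ g₃))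
  | sr5' (g₁ g₂ g₃ : GGoal α) :
      GStep P (.and (.or g₁ g₂) g₃) (.or (.and g₁ g₃) (.and g₂ g₃))
  | andL (g g' h : GGoal α) : GStep P g g' → GStep P (.and g h) (.and g' h)
  | andR (g h h' : GGoal α) : GStep P h h' → GStep P (.and g h) (.and g h')
  | orL (g g' h : GGoal α) : GStep P g g' → GStep P (.or g h) (.or g' h)
  | orR (g h h' : GGoal α) : GStep P h h' → GStep P (.or g h) (.or g h')

/-- Rewrite sequences: the reflexive-transitive closure of single rewrite steps. -/
def GSteps {α : Type} [DecidableEq α] (P : List (PRule α)) : GGoal α → GGoal α → Prop :=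
  Relation.ReflTransGen (GStep P)

/-- The goal `T(C₁) ∨ … ∨ T(Cₘ)`. -/
def disjTT {α : Type} (Cs : List (Set (Lit α))) : GGoal α :=
  disjList (Cs.map GGoal.T)

/-- The initial goal for a literal `g` (empty rewrite chain so far). -/
def initGoal {α : Type} (g : Lit α) : GGoal α := GGoal.lit g []

/-! ### Auxiliary development for the soundness proof -/

namespace GRS

variable {α : Type}

/-! #### Basic literal lemmas -/

theorem Lit.compl_compl (l : Lit α) : l.compl.compl = l := by cases l <;> rfl

theorem head?_append_left {β : Type _} (u v : List β) (hu : u ≠ []) :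
    (u ++ v).head? = u.head? := by cases u <;> simp_all


theorem compl_eq_comm {x y : Lit α} : x = y.compl ↔ y = x.compl := by
  cases x <;> cases y <;> simp [Lit.compl] <;> exact eq_comm

theorem not_isPos_iff (x : Lit α) : ¬ x.isPos ↔ ∃ b, x = Lit.neg b := by
  cases x <;> simp [Lit.isPos]

theorem mem_bodyLits {r : PRule α} {l : Lit α} :
    l ∈ bodyLits r ↔ (∃ b ∈ r.pos, l = Lit.pos b) ∨ (∃ c ∈ r.neg, l = Lit.neg c) := by
  simp [bodyLits, List.mem_append, List.mem_map, eq_comm]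

theorem mem_rulesFor [DecidableEq α] {P : List (PRule α)} {a : α} {r : PRule α} :
    r ∈ rulesFor P a ↔ r ∈ P ∧ r.head = a := by
  simp [rulesFor, List.mem_filter]

/-! #### Derivability monotone -/

theorem Derives_mono {P : List (PRule α)} {S S' : Set α} (h : S ⊆ S') {a : α}
    (hd : Derives P S a) : Derives P S' a := by
  induction hd with
  | step r hr hpos hneg ih => exact .step r hr (fun b hb => ih b hb) (fun c hc => h (hneg c hc))

/-! #### PART D : model construction -/

theorem psm_of_good (P : List (PRule α)) (C : Set (Lit α))
    (hcon : ConsistentSet C)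
    (hpos : ∀ a, Lit.pos a ∈ C → Derives P {b | Lit.neg b ∈ C} a)
    (hneg : ∀ a, Lit.neg a ∈ C → ∀ r ∈ P, r.head = a →
      (∃ b ∈ r.pos, Lit.neg b ∈ C) ∨ (∃ c ∈ r.neg, Lit.pos c ∈ C)) :
    ∃ M, IsPSM P M ∧ C ⊆ M := by
  classical
  set N : Set α := {b | Lit.neg b ∈ C} with hN
  have L1 : ∀ x, Derives P N x → x ∉ N := by
    intro x hx
    induction hx with
    | step r hr hposb hnegb ih =>
      intro hxN
      rcases hneg _ hxN r hr rfl with ⟨b, hb, hbC⟩ | ⟨c, hc, hcC⟩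
      · exact ih b hb hbC
      · exact hcon c ⟨hcC, hnegb c hc⟩
  have hNFN : N ⊆ FPop P N := fun x hx hd => L1 x hd hx
  have L3 : ∀ x, Derives P (FPop P N) x → x ∉ N := by
    intro x hx
    induction hx with
    | step r hr hposb hnegb ih =>
      intro hxN
      rcases hneg _ hxN r hr rfl with ⟨b, hb, hbC⟩ | ⟨c, hc, hcC⟩
      · exact ih b hb hbC
      · exact (hnegb c hc) (hpos c hcC)
  have hNFFN : N ⊆ FPop P (FPop P N) := fun x hx hd => L3 x hd hx
  have anti : ∀ S S' : Set α, S ⊆ S' → FPop P S' ⊆ FPop P S := by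
    intro S S' hss x hx hd; exact hx (Derives_mono hss hd)
  set K : Set (Set α) := {X | N ⊆ X ∧ X ⊆ FPop P N ∧ FPop P (FPop P X) ⊆ X} with hK
  set S : Set α := {x | ∀ X ∈ K, x ∈ X} with hS
  have hFNK : FPop P N ∈ K := ⟨hNFN, subset_rfl, anti _ _ hNFFN⟩
  have hNS : N ⊆ S := fun x hx X hX => hX.1 hx
  have hSFN : S ⊆ FPop P N := fun x hx => hx _ hFNK
  have hF2SS : FPop P (FPop P S) ⊆ S := by
    intro x hx X hXK
    have hSX : S ⊆ X := fun y hy => hy X hXK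
    exact hXK.2.2 (anti _ _ (anti _ _ hSX) hx)
  have hF2SK : FPop P (FPop P S) ∈ K := by
    refine ⟨?_, ?_, ?_⟩
    · exact fun x hx => (anti _ _ (anti _ _ hNS)) (hNFFN hx)
    · exact fun x hx => hFNK.2.2 ((anti _ _ (anti _ _ hSFN)) hx)
    · exact anti _ _ (anti _ _ hF2SS)
  have hSF2S : S ⊆ FPop P (FPop P S) := fun x hx => hx _ hF2SK
  have hfix : FPop P (FPop P S) = S := Set.Subset.antisymm hF2SS hSF2S
  have hFSK : FPop P S ∈ K := by
    refine ⟨?_, anti _ _ hNS, ?_⟩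
    · exact fun x hx => (anti _ _ hSFN) (hNFFN hx)
    · exact le_of_eq (congrArg (FPop P) hfix)
  have hSFS : S ⊆ FPop P S := fun x hx => hx _ hFSK
  refine ⟨modelOf P S, ⟨S, hfix, hSFS, rfl⟩, ?_⟩
  intro l hl
  cases l with
  | neg a => exact ⟨a, Or.inl ⟨rfl, hNS hl⟩⟩
  | pos a => exact ⟨a, Or.inr ⟨rfl, Derives_mono hNS (hpos a hl)⟩⟩

/-! #### PART A : chain combinatorics -/

/-- Every internal literal of the chain was expanded, so no prefix ending strictly
inside the chain is a loop chain. -/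
def ValidChain (c : List (Lit α)) : Prop :=
  ∀ d x e, c = d ++ x :: e → e ≠ [] → ¬ LoopChain (d ++ [x])

theorem snoc_split {c d e : List (Lit α)} {l x : Lit α} (h : c ++ [l] = d ++ x :: e) :
    (d = c ∧ x = l ∧ e = []) ∨ ∃ e', e = e' ++ [l] ∧ c = d ++ x :: e' := by
  rcases e.eq_nil_or_concat with he | ⟨e', y, he⟩
  · subst he
    have := List.append_inj' h rfl
    exact Or.inl ⟨this.1.symm, by simpa using this.2.symm, rfl⟩
  · subst he
    have h2 : c ++ [l] = (d ++ x :: e') ++ [y] := by simpa using h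
    have := List.append_inj' h2 rfl
    refine Or.inr ⟨e', ?_, this.1⟩
    have : l = y := by simpa using this.2
    simp [this]

theorem fail_of_pair {c p q : List (Lit α)} {x y : Lit α} (hc : c = p ++ x :: (q ++ [y]))
    (hxy : x = y.compl) : FailLoopChain c := by
  refine ⟨x :: (q ++ [y]), ⟨p, hc.symm⟩, Or.inr ?_⟩
  constructor
  · simp
  · have hgl : (x :: (q ++ [y])).getLast? = some y := by
      have : x :: (q ++ [y]) = (x :: q) ++ [y] := by simp
      rw [this, List.getLast?_concat]
    rw [hgl]
    simp [hxy]

theorem valid_no_pair {c p q rest : List (Lit α)} {x y : Lit α} (hv : ValidChain c)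
    (hc : c = p ++ x :: (q ++ y :: rest)) (hrest : rest ≠ []) : x ≠ y.compl := by
  intro hxy
  have hc2 : c = (p ++ x :: q) ++ y :: rest := by simp [hc]
  have hnl := hv _ _ _ hc2 hrest
  exact hnl (Or.inl (fail_of_pair (p := p) (q := q)
    (show (p ++ x :: q) ++ [y] = p ++ x :: (q ++ [y]) by simp) hxy))

theorem two_mem_split {c : List (Lit α)} {x y : Lit α} (hx : x ∈ c) (hy : y ∈ c)
    (hxy : x ≠ y) :
    (∃ p q r, c = p ++ x :: (q ++ y :: r)) ∨ (∃ p q r, c = p ++ y :: (q ++ x :: r)) := by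
  obtain ⟨s, t, rfl⟩ := List.append_of_mem hx
  rcases List.mem_append.1 hy with hys | hyt
  · obtain ⟨u, v, rfl⟩ := List.append_of_mem hys
    exact Or.inr ⟨u, v, t, by simp⟩
  · rcases List.mem_cons.1 hyt with h | hyt
    · exact absurd h.symm hxy
    · obtain ⟨u, v, rfl⟩ := List.append_of_mem hyt
      exact Or.inl ⟨s, u, v, by simp⟩

theorem pair_cases {c : List (Lit α)} (hv : ValidChain c) {x y : Lit α}
    (hx : x ∈ c) (hy : y ∈ c) (hxy : x = y.compl) :
    FailLoopChain c := by
  have hne : x ≠ y := by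
    subst hxy; cases y <;> simp [Lit.compl]
  have key : ∀ (u w : Lit α) p q r, c = p ++ u :: (q ++ w :: r) → u = w.compl →
      FailLoopChain c := by
    intro u w p q r hc huw
    rcases r.eq_nil_or_concat with hr | ⟨r', z, hr⟩
    · subst hr
      exact fail_of_pair hc huw
    · exact absurd huw (valid_no_pair hv hc (by simp [hr]))
  rcases two_mem_split hx hy hne with ⟨p, q, r, hc⟩ | ⟨p, q, r, hc⟩
  · exact key x y p q r hc hxy
  · exact key y x p q r hc (by rw [hxy, Lit.compl_compl])

theorem validChain_extend {c : List (Lit α)} (hv : ValidChain c) (hl : ¬ LoopChain c)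
    (l : Lit α) : ValidChain (c ++ [l]) := by
  intro d x e heq hne
  rcases snoc_split heq with ⟨rfl, rfl, rfl⟩ | ⟨e', he, hc⟩
  · exact absurd rfl hne
  · rcases e'.eq_nil_or_concat with he' | ⟨e'', y, he'⟩
    · subst he'
      simpa [hc] using hl
    · exact hv d x e' hc (by simp [he'])

theorem consistent_of_valid_noLoop {c : List (Lit α)} (hv : ValidChain c)
    (hl : ¬ LoopChain c) : ConsistentSet {x | x ∈ c} := by
  intro a ⟨hp, hn⟩
  exact hl (Or.inl (pair_cases hv hp hn rfl))

theorem consistent_of_valid_succ {c : List (Lit α)} (hv : ValidChain c)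
    (hs : SuccLoopChain c) : ConsistentSet {x | x ∈ c} := by
  intro a ⟨hp, hn⟩
  -- from the succ loop, the last literal `v` of `c` occurs also internally
  obtain ⟨seg, ⟨t0, ht0⟩, hNE⟩ := hs
  have hlen2 : 2 ≤ seg.length := by rcases hNE with h | h <;> exact h.1
  have hhg : seg.head? = seg.getLast? := by rcases hNE with h | h <;> exact h.2.1
  obtain ⟨s0, ss, rfl⟩ : ∃ s0 ss, seg = s0 :: ss := by
    cases seg with
    | nil => simp at hlen2
    | cons s0 ss => exact ⟨s0, ss, rfl⟩
  obtain ⟨mid, v, rfl⟩ : ∃ mid v, ss = mid ++ [v] := by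
    rcases ss.eq_nil_or_concat with h | ⟨mid, v, h⟩
    · subst h; simp at hlen2
    · exact ⟨mid, v, by simpa using h⟩
  have hs0 : s0 = v := by
    have h1 : (s0 :: (mid ++ [v])).getLast? = some v := by
      rw [show s0 :: (mid ++ [v]) = (s0 :: mid) ++ [v] by simp, List.getLast?_concat]
    rw [h1] at hhg
    simpa using hhg
  have hc : c = t0 ++ v :: (mid ++ [v]) := by rw [← ht0, hs0]
  have hlastv : c.getLast? = some v := by
    rw [hc, show t0 ++ v :: (mid ++ [v]) = (t0 ++ v :: mid) ++ [v] by simp,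
      List.getLast?_concat]
  have key : ∀ (x y : Lit α) p q r, x = y.compl → c = p ++ x :: (q ++ y :: r) → False := by
    intro x y p q r hxy hc2
    rcases r.eq_nil_or_concat with hr | ⟨r', z, hr⟩
    · subst hr
      -- y is the last literal of c, so y = v and x = v.compl occurs internally
      have hyv : y = v := by
        have : c.getLast? = some y := by
          rw [hc2, show p ++ x :: (q ++ [y]) = (p ++ x :: q) ++ [y] by simp,
            List.getLast?_concat]
        rw [hlastv] at this
        simpa using this.symm
      subst hyv
      have hxc : x ∈ c := by rw [hc2]; simp
      have hvv : x ≠ y := by rw [hxy]; cases y <;> simp [Lit.compl]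
      rw [hc] at hxc
      rcases List.mem_append.1 hxc with hx0 | hx1
      · obtain ⟨t1, t2, rfl⟩ := List.append_of_mem hx0
        have hshape : c = t1 ++ x :: (t2 ++ y :: (mid ++ [y])) := by rw [hc]; simp
        exact (valid_no_pair hv hshape (by simp)) hxy
      · rcases List.mem_cons.1 hx1 with h | hx2
        · exact hvv h
        · rcases List.mem_append.1 hx2 with hxm | hxv
          · obtain ⟨m1, m2, rfl⟩ := List.append_of_mem hxm
            have hshape : c = t0 ++ y :: (m1 ++ x :: (m2 ++ [y])) := by rw [hc]; simp
            have := valid_no_pair hv hshape (by simp)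
            exact this (by rw [hxy, Lit.compl_compl])
          · exact hvv (by simpa using hxv)
    · exact (valid_no_pair hv hc2 (by simp [hr])) hxy
  have hne : (Lit.pos a : Lit α) ≠ Lit.neg a := by simp
  rcases two_mem_split hp hn hne with ⟨p, q, r, hc2⟩ | ⟨p, q, r, hc2⟩
  · exact key (Lit.pos a) (Lit.neg a) p q r rfl hc2
  · exact key (Lit.neg a) (Lit.pos a) p q r rfl hc2

/-! #### Structural answer predicate -/

inductive SAnsP : GGoal α → Set (Lit α) → Set (List (Lit α)) → Prop
  | t (C0 : Set (Lit α)) : SAnsP (.T C0) C0 ∅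
  | lit (l : Lit α) (anc : List (Lit α)) : SAnsP (.lit l anc) {x | x ∈ anc ++ [l]} {anc ++ [l]}
  | and {g1 g2 : GGoal α} {C1 U1 C2 U2} :
      SAnsP g1 C1 U1 → SAnsP g2 C2 U2 → SAnsP (.and g1 g2) (C1 ∪ C2) (U1 ∪ U2)
  | orl {g1 g2 : GGoal α} {C U} : SAnsP g1 C U → SAnsP (.or g1 g2) C U
  | orr {g1 g2 : GGoal α} {C U} : SAnsP g2 C U → SAnsP (.or g1 g2) C U

/-! #### Global witness structure -/

def NodeJust (P : List (PRule α)) (AMB : List (List (Lit α))) (d : List (Lit α)) :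
    Lit α → Prop
  | .pos a => ∃ r ∈ P, r.head = a ∧ ∀ l ∈ bodyLits r, ∃ c' ∈ AMB, (d ++ [Lit.pos a, l]) <+: c'
  | .neg a => ∀ r ∈ P, r.head = a → ∃ l ∈ bodyLits r, ∃ c' ∈ AMB, (d ++ [Lit.neg a, l.compl]) <+: c'

def ChainCond (P : List (PRule α)) (U : Set (List (Lit α))) (AMB : List (List (Lit α)))
    (c : List (Lit α)) : Prop :=
  ∀ d x e, c = d ++ x :: e →
    (e ≠ [] → NodeJust P AMB d x) ∧
    (e = [] → (c ∈ U ∨ SuccLoopChain c ∨ NodeJust P AMB d x))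

def GLOB (P : List (PRule α)) (g : Lit α) (C : Set (Lit α)) (U : Set (List (Lit α)))
    (Ch : List (List (Lit α))) : Prop :=
  Ch ≠ [] ∧ (∀ u ∈ U, u ∈ Ch) ∧ C = {x | ∃ c ∈ Ch, x ∈ c} ∧
  (∀ c ∈ Ch, c ≠ [] ∧ c.head? = some g) ∧ (∀ c ∈ Ch, ChainCond P U Ch c)

theorem NodeJust_mono {P : List (PRule α)} {A A' : List (List (Lit α))}
    (hAA : ∀ c ∈ A, c ∈ A') {d : List (Lit α)} {x : Lit α}
    (h : NodeJust P A d x) : NodeJust P A' d x := by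
  cases x with
  | pos a =>
    obtain ⟨r, hr, hh, hb⟩ := h
    exact ⟨r, hr, hh, fun l hl => by obtain ⟨c', hc', hp⟩ := hb l hl; exact ⟨c', hAA _ hc', hp⟩⟩
  | neg a =>
    intro r hr hh
    obtain ⟨l, hl, c', hc', hp⟩ := h r hr hh
    exact ⟨l, hl, c', hAA _ hc', hp⟩

/-! #### SAnsP inversion lemmas -/

theorem SAnsP_F_inv {C : Set (Lit α)} {U : Set (List (Lit α))}
    (h : SAnsP (.F : GGoal α) C U) : False := by cases h

theorem SAnsP_T_inv {C0 C : Set (Lit α)} {U : Set (List (Lit α))}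
    (h : SAnsP (.T C0) C U) : C = C0 ∧ U = ∅ := by cases h; exact ⟨rfl, rfl⟩

theorem SAnsP_lit_inv {l : Lit α} {anc : List (Lit α)} {C : Set (Lit α)}
    {U : Set (List (Lit α))} (h : SAnsP (.lit l anc) C U) :
    C = {x | x ∈ anc ++ [l]} ∧ U = {anc ++ [l]} := by cases h; exact ⟨rfl, rfl⟩

theorem SAnsP_and_inv {g1 g2 : GGoal α} {C : Set (Lit α)} {U : Set (List (Lit α))}
    (h : SAnsP (.and g1 g2) C U) :
    ∃ C1 U1 C2 U2, SAnsP g1 C1 U1 ∧ SAnsP g2 C2 U2 ∧ C = C1 ∪ C2 ∧ U = U1 ∪ U2 := by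
  cases h with
  | and h1 h2 => exact ⟨_, _, _, _, h1, h2, rfl, rfl⟩

theorem SAnsP_or_inv {g1 g2 : GGoal α} {C : Set (Lit α)} {U : Set (List (Lit α))}
    (h : SAnsP (.or g1 g2) C U) : SAnsP g1 C U ∨ SAnsP g2 C U := by
  cases h with
  | orl h1 => exact Or.inl h1
  | orr h2 => exact Or.inr h2

theorem SAnsP_disjList_inv {L : List (GGoal α)} {C : Set (Lit α)} {U : Set (List (Lit α))}
    (h : SAnsP (disjList L) C U) : ∃ gg ∈ L, SAnsP gg C U := by
  induction L with
  | nil => exact absurd h SAnsP_F_inv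
  | cons g1 L ih =>
    cases L with
    | nil => exact ⟨g1, by simp, h⟩
    | cons g2 L' =>
      rcases SAnsP_or_inv h with h1 | h2
      · exact ⟨g1, by simp, h1⟩
      · obtain ⟨gg, hm, hA⟩ := ih h2
        exact ⟨gg, List.mem_cons_of_mem _ hm, hA⟩

theorem conj_leaf_inv {ch : List (Lit α)} {B : List (Lit α)} (hB : B ≠ [])
    {C : Set (Lit α)} {U : Set (List (Lit α))}
    (h : SAnsP (conjList ch (B.map (fun l => GGoal.lit l ch))) C U) :
    C = {x | x ∈ ch ∨ x ∈ B} ∧ U = {c | ∃ l ∈ B, c = ch ++ [l]} := by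
  induction B generalizing C U with
  | nil => exact absurd rfl hB
  | cons l0 B ih =>
    cases B with
    | nil =>
      obtain ⟨hC, hU⟩ := SAnsP_lit_inv h
      constructor
      · rw [hC]; ext x; simp
      · rw [hU]; ext c; simp
    | cons l1 B' =>
      obtain ⟨C1, U1, C2, U2, h1, h2, rfl, rfl⟩ := SAnsP_and_inv h
      obtain ⟨hC1, hU1⟩ := SAnsP_lit_inv h1
      obtain ⟨hC2, hU2⟩ := ih (by simp) h2
      constructor
      · rw [hC1, hC2]; ext x; simp [List.mem_append]; try tauto
      · rw [hU1, hU2]; ext c; simp; try tauto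

theorem forall₂_mem_left {β γ : Type _} {R : β → γ → Prop} {as : List β} {bs : List γ}
    (h : List.Forall₂ R as bs) {a : β} (ha : a ∈ as) : ∃ b ∈ bs, R a b := by
  induction h with
  | nil => cases ha
  | cons hR hF ih =>
    rcases List.mem_cons.1 ha with rfl | ha
    · exact ⟨_, by simp, hR⟩
    · obtain ⟨b, hb, hRb⟩ := ih ha
      exact ⟨b, List.mem_cons_of_mem _ hb, hRb⟩

theorem conj_disj_inv {ch : List (Lit α)} {Rs : List (PRule α)} (hR : Rs ≠ [])
    {C : Set (Lit α)} {U : Set (List (Lit α))}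
    (h : SAnsP (conjList ch (Rs.map
      (fun r => disjList ((bodyLits r).map (fun l => GGoal.lit l.compl ch))))) C U) :
    ∃ ls : List (Lit α), List.Forall₂ (fun (r : PRule α) (l : Lit α) => l ∈ bodyLits r) Rs ls ∧
      C = {x | x ∈ ch ∨ ∃ l ∈ ls, x = l.compl} ∧
      U = {c | ∃ l ∈ ls, c = ch ++ [l.compl]} := by
  induction Rs generalizing C U with
  | nil => exact absurd rfl hR
  | cons r0 Rs ih =>
    cases Rs with
    | nil =>
      obtain ⟨gg, hggm, hggA⟩ := SAnsP_disjList_inv h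
      obtain ⟨l, hl, rfl⟩ := List.mem_map.1 hggm
      obtain ⟨hC, hU⟩ := SAnsP_lit_inv hggA
      refine ⟨[l], List.Forall₂.cons hl List.Forall₂.nil, ?_, ?_⟩
      · rw [hC]; ext x; simp [List.mem_append]; try tauto
      · rw [hU]; ext c; simp
    | cons r1 Rs' =>
      obtain ⟨C1, U1, C2, U2, h1, h2, rfl, rfl⟩ := SAnsP_and_inv h
      obtain ⟨gg, hggm, hggA⟩ := SAnsP_disjList_inv h1
      obtain ⟨l, hl, rfl⟩ := List.mem_map.1 hggm
      obtain ⟨hC1, hU1⟩ := SAnsP_lit_inv hggA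
      obtain ⟨ls, hF, hC2, hU2⟩ := ih (by simp) h2
      refine ⟨l :: ls, List.Forall₂.cons hl hF, ?_, ?_⟩
      · rw [hC1, hC2]; ext x; simp [List.mem_append]; try tauto
      · rw [hU1, hU2]; ext c; simp; try tauto

/-! #### GLOB congruence and surgery -/

theorem glob_congr {P : List (PRule α)} {g : Lit α} {C C' : Set (Lit α)}
    {U U' : Set (List (Lit α))} {Ch : List (List (Lit α))}
    (hC : C = C') (hU : U = U') (h : GLOB P g C U Ch) : GLOB P g C' U' Ch := by
  subst hC; subst hU; exact h

theorem glob_surgery {P : List (PRule α)} {g : Lit α}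
    {C0 : Set (Lit α)} {U0 : Set (List (Lit α))} {d0 : List (Lit α)} {x0 : Lit α}
    {Ch : List (List (Lit α))} (ls : List (Lit α))
    (hG : GLOB P g ({x | x ∈ d0 ++ [x0]} ∪ C0) ({d0 ++ [x0]} ∪ U0) Ch)
    (hlast : SuccLoopChain (d0 ++ [x0]) ∨
      NodeJust P (Ch ++ ls.map (fun l => (d0 ++ [x0]) ++ [l])) d0 x0)
    (hnj : ls ≠ [] → NodeJust P (Ch ++ ls.map (fun l => (d0 ++ [x0]) ++ [l])) d0 x0) :
    GLOB P g (({x | x ∈ d0 ++ [x0]} ∪ {x | ∃ l ∈ ls, x ∈ (d0 ++ [x0]) ++ [l]}) ∪ C0)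
      ({c | ∃ l ∈ ls, c = (d0 ++ [x0]) ++ [l]} ∪ U0)
      (Ch ++ ls.map (fun l => (d0 ++ [x0]) ++ [l])) := by
  obtain ⟨hne, hU, hCs, hheads, hconds⟩ := hG
  have hchCh : d0 ++ [x0] ∈ Ch := hU _ (Or.inl rfl)
  have hmono : ∀ c ∈ Ch, c ∈ Ch ++ ls.map (fun l => (d0 ++ [x0]) ++ [l]) :=
    fun c hc => List.mem_append_left _ hc
  refine ⟨by simp [hne], ?_, ?_, ?_, ?_⟩
  · rintro u (⟨l, hl, rfl⟩ | hu)
    · exact List.mem_append_right _ (List.mem_map.2 ⟨l, hl, rfl⟩)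
    · exact hmono _ (hU u (Or.inr hu))
  · have hCs' : ∀ x, x ∈ ({x | x ∈ d0 ++ [x0]} ∪ C0 : Set (Lit α)) ↔ ∃ c ∈ Ch, x ∈ c := by
      intro x; rw [hCs]; rfl
    ext x
    constructor
    · rintro (hx | hx)
      · rcases hx with hx | hx
        · obtain ⟨c, hc, hxc⟩ := (hCs' x).1 (Or.inl hx)
          exact ⟨c, hmono c hc, hxc⟩
        · obtain ⟨l, hl, hxc⟩ := hx
          exact ⟨_, List.mem_append_right _ (List.mem_map.2 ⟨l, hl, rfl⟩), hxc⟩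
      · obtain ⟨c, hc, hxc⟩ := (hCs' x).1 (Or.inr hx)
        exact ⟨c, hmono c hc, hxc⟩
    · rintro ⟨c, hc, hxc⟩
      rcases List.mem_append.1 hc with hc | hc
      · rcases (hCs' x).2 ⟨c, hc, hxc⟩ with hx | hx
        · exact Or.inl (Or.inl hx)
        · exact Or.inr hx
      · obtain ⟨l, hl, rfl⟩ := List.mem_map.1 hc
        exact Or.inl (Or.inr ⟨l, hl, hxc⟩)
  · intro c hc
    rcases List.mem_append.1 hc with hc | hc
    · exact hheads c hc
    · obtain ⟨l, hl, rfl⟩ := List.mem_map.1 hc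
      obtain ⟨hne0, hh0⟩ := hheads _ hchCh
      exact ⟨by simp, by rw [head?_append_left _ _ hne0]; exact hh0⟩
  · intro c hc
    rcases List.mem_append.1 hc with hc | hc
    · -- old chains
      intro d x e hsplit
      obtain ⟨hi, hl⟩ := hconds c hc d x e hsplit
      refine ⟨fun he => NodeJust_mono hmono (hi he), fun he => ?_⟩
      rcases hl he with hin | hs | hnjold
      · rcases hin with hin | hin
        · -- c = d0 ++ [x0]
          rcases hlast with hS | hNJ
          · exact Or.inr (Or.inl (hin ▸ hS))
          · subst he
            have hdx : d = d0 ∧ x = x0 := by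
              have h2 : d ++ [x] = d0 ++ [x0] := by rw [← hsplit, hin]
              have := List.append_inj' h2 rfl
              exact ⟨this.1, by simpa using this.2⟩
            obtain ⟨rfl, rfl⟩ := hdx
            exact Or.inr (Or.inr hNJ)
        · exact Or.inl (Or.inr hin)
      · exact Or.inr (Or.inl hs)
      · exact Or.inr (Or.inr (NodeJust_mono hmono hnjold))
    · -- new chains
      obtain ⟨l, hl, rfl⟩ := List.mem_map.1 hc
      intro d x e hsplit
      rcases snoc_split hsplit with ⟨rfl, rfl, rfl⟩ | ⟨e', rfl, hch⟩
      · exact ⟨fun he => absurd rfl he, fun _ => Or.inl (Or.inl ⟨x, hl, rfl⟩)⟩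
      · refine ⟨fun _ => ?_, fun he => by simp at he⟩
        rcases e'.eq_nil_or_concat with rfl | ⟨e'', y, he''⟩
        · have hdx : d = d0 ∧ x = x0 := by
            have := List.append_inj' hch.symm rfl
            exact ⟨this.1, by simpa using this.2⟩
          obtain ⟨rfl, rfl⟩ := hdx
          exact hnj (by rintro rfl; cases hl)
        · obtain ⟨hi, _⟩ := hconds _ hchCh d x e' hch
          exact NodeJust_mono hmono (hi (by simp [he'']))

/-! #### The simulation lemma -/

theorem setlits_eq (ch : List (Lit α)) (B : List (Lit α)) :
    (({x | x ∈ ch} : Set (Lit α)) ∪ {x | ∃ l ∈ B, x ∈ ch ++ [l]}) = {x | x ∈ ch ∨ x ∈ B} := by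
  ext x
  simp only [Set.mem_union, Set.mem_setOf_eq, List.mem_append, List.mem_singleton]
  constructor
  · rintro (hx | ⟨l, hl, (hx | rfl)⟩)
    exacts [Or.inl hx, Or.inl hx, Or.inr hl]
  · rintro (hx | hx)
    exacts [Or.inl hx, Or.inr ⟨x, hx, Or.inr rfl⟩]

theorem setlits_eq_neg (ch : List (Lit α)) (ls : List (Lit α)) :
    (({x | x ∈ ch} : Set (Lit α)) ∪ {x | ∃ l' ∈ ls.map Lit.compl, x ∈ ch ++ [l']})
      = {x | x ∈ ch ∨ ∃ l ∈ ls, x = l.compl} := by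
  ext x
  simp only [Set.mem_union, Set.mem_setOf_eq, List.mem_append, List.mem_singleton,
    List.mem_map]
  constructor
  · rintro (hx | ⟨l', ⟨l, hl, rfl⟩, (hx | rfl)⟩)
    exacts [Or.inl hx, Or.inl hx, Or.inr ⟨l, hl, rfl⟩]
  · rintro (hx | ⟨l, hl, rfl⟩)
    exacts [Or.inl hx, Or.inr ⟨l.compl, ⟨l, hl, rfl⟩, Or.inr rfl⟩]

theorem setU_eq_neg (ch : List (Lit α)) (ls : List (Lit α)) :
    ({c | ∃ l' ∈ ls.map Lit.compl, c = ch ++ [l']} : Set (List (Lit α)))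
      = {c | ∃ l ∈ ls, c = ch ++ [l.compl]} := by
  ext c
  simp only [Set.mem_setOf_eq, List.mem_map]
  constructor
  · rintro ⟨l', ⟨l, hl, rfl⟩, rfl⟩
    exact ⟨l, hl, rfl⟩
  · rintro ⟨l, hl, rfl⟩
    exact ⟨l.compl, ⟨l, hl, rfl⟩, rfl⟩

theorem step_sim [DecidableEq α] {P : List (PRule α)} {g : Lit α} {h h' : GGoal α}
    (st : GStep P h h') :
    ∀ C' U', SAnsP h' C' U' → ∃ C U, SAnsP h C U ∧
      ∀ C0 U0 Ch, GLOB P g (C ∪ C0) (U ∪ U0) Ch →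
        ∃ Ch', GLOB P g (C' ∪ C0) (U' ∪ U0) Ch' := by
  induction st with
  | litPos a anc hL =>
    intro C' U' hA
    unfold posExp at hA
    obtain ⟨gg, hggmem, hggA⟩ := SAnsP_disjList_inv hA
    obtain ⟨r, hrmem, rfl⟩ := List.mem_map.1 hggmem
    obtain ⟨hrP, hrhead⟩ := mem_rulesFor.1 hrmem
    refine ⟨_, _, SAnsP.lit (Lit.pos a) anc, ?_⟩
    intro C0 U0 Ch hG
    rcases hBe : bodyLits r with _ | ⟨l0, B'⟩
    · rw [hBe] at hggA
      simp only [List.map_nil] at hggA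
      obtain ⟨rfl, rfl⟩ := SAnsP_T_inv hggA
      have hnode : NodeJust P
          (Ch ++ ([] : List (Lit α)).map (fun l => (anc ++ [Lit.pos a]) ++ [l]))
          anc (Lit.pos a) := by
        refine ⟨r, hrP, hrhead, ?_⟩
        intro l hl; rw [hBe] at hl; cases hl
      have hs := glob_surgery (d0 := anc) (x0 := Lit.pos a) [] hG (Or.inr hnode)
        (fun hh => absurd rfl hh)
      exact ⟨_, glob_congr (by ext x; simp) (by ext c; simp) hs⟩
    · rw [hBe] at hggA
      obtain ⟨rfl, rfl⟩ := conj_leaf_inv (by simp) hggA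
      have hnode : NodeJust P
          (Ch ++ (l0 :: B').map (fun l => (anc ++ [Lit.pos a]) ++ [l]))
          anc (Lit.pos a) := by
        refine ⟨r, hrP, hrhead, ?_⟩
        intro l hl
        rw [hBe] at hl
        refine ⟨(anc ++ [Lit.pos a]) ++ [l],
          List.mem_append_right _ (List.mem_map.2 ⟨l, hl, rfl⟩), ?_⟩
        have he : anc ++ [Lit.pos a, l] = (anc ++ [Lit.pos a]) ++ [l] := by simp
        rw [he]
      have hs := glob_surgery (d0 := anc) (x0 := Lit.pos a) (l0 :: B') hG (Or.inr hnode)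
        (fun _ => hnode)
      refine ⟨_, glob_congr ?_ rfl hs⟩
      · exact congrArg (· ∪ C0) (setlits_eq _ _)
  | litNeg a anc hL =>
    intro C' U' hA
    unfold negExp at hA
    rcases hRe : rulesFor P a with _ | ⟨r0, Rs'⟩
    · rw [hRe] at hA
      simp only [List.map_nil] at hA
      obtain ⟨rfl, rfl⟩ := SAnsP_T_inv hA
      refine ⟨_, _, SAnsP.lit (Lit.neg a) anc, ?_⟩
      intro C0 U0 Ch hG
      have hnode : NodeJust P
          (Ch ++ ([] : List (Lit α)).map (fun l => (anc ++ [Lit.neg a]) ++ [l]))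
          anc (Lit.neg a) := by
        intro r hr hh
        exact absurd (mem_rulesFor.2 ⟨hr, hh⟩) (by rw [hRe]; simp)
      have hs := glob_surgery (d0 := anc) (x0 := Lit.neg a) [] hG (Or.inr hnode)
        (fun hh => absurd rfl hh)
      exact ⟨_, glob_congr (by ext x; simp) (by ext c; simp) hs⟩
    · rw [hRe] at hA
      obtain ⟨ls, hF, rfl, rfl⟩ := conj_disj_inv (by simp) hA
      refine ⟨_, _, SAnsP.lit (Lit.neg a) anc, ?_⟩
      intro C0 U0 Ch hG
      have hnode : NodeJust P
          (Ch ++ (ls.map Lit.compl).map (fun l => (anc ++ [Lit.neg a]) ++ [l]))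
          anc (Lit.neg a) := by
        intro r hr hh
        have hrm : r ∈ rulesFor P a := mem_rulesFor.2 ⟨hr, hh⟩
        rw [hRe] at hrm
        obtain ⟨l, hlls, hlb⟩ := forall₂_mem_left hF hrm
        refine ⟨l, hlb, (anc ++ [Lit.neg a]) ++ [l.compl], ?_, ?_⟩
        · exact List.mem_append_right _
            (List.mem_map.2 ⟨l.compl, List.mem_map.2 ⟨l, hlls, rfl⟩, rfl⟩)
        · have he : anc ++ [Lit.neg a, l.compl] = (anc ++ [Lit.neg a]) ++ [l.compl] := by
            simp
          rw [he]
      have hs := glob_surgery (d0 := anc) (x0 := Lit.neg a) (ls.map Lit.compl) hG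
        (Or.inr hnode) (fun _ => hnode)
      refine ⟨_, glob_congr ?_ ?_ hs⟩
      · exact congrArg (· ∪ C0) (setlits_eq_neg _ _)
      · exact congrArg (· ∪ U0) (setU_eq_neg _ _)
  | lr1 l anc hF => intro C' U' hA; exact absurd hA SAnsP_F_inv
  | lr2 l anc hS =>
    intro C' U' hA
    obtain ⟨rfl, rfl⟩ := SAnsP_T_inv hA
    refine ⟨_, _, SAnsP.lit l anc, ?_⟩
    intro C0 U0 Ch hG
    have hs := glob_surgery (d0 := anc) (x0 := l) [] hG (Or.inl hS)
      (fun hh => absurd rfl hh)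
    exact ⟨_, glob_congr (by ext x; simp) (by ext c; simp) hs⟩
  | sr1 g1 => intro C' U' hA; exact ⟨C', U', SAnsP.orr hA, fun C0 U0 Ch hG => ⟨Ch, hG⟩⟩
  | sr1' g1 => intro C' U' hA; exact ⟨C', U', SAnsP.orl hA, fun C0 U0 Ch hG => ⟨Ch, hG⟩⟩
  | sr2 g1 => intro C' U' hA; exact absurd hA SAnsP_F_inv
  | sr2' g1 => intro C' U' hA; exact absurd hA SAnsP_F_inv
  | sr3 C1 C2 hcons =>
    intro C' U' hA
    obtain ⟨rfl, rfl⟩ := SAnsP_T_inv hA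
    refine ⟨C1 ∪ C2, ∅ ∪ ∅, SAnsP.and (SAnsP.t C1) (SAnsP.t C2), ?_⟩
    intro C0 U0 Ch hG
    exact ⟨Ch, glob_congr rfl (by simp) hG⟩
  | sr4 C1 C2 hcons => intro C' U' hA; exact absurd hA SAnsP_F_inv
  | sr5 g1 g2 g3 =>
    intro C' U' hA
    rcases SAnsP_or_inv hA with hA | hA
    · obtain ⟨C1, U1, C2, U2, h1, h2, rfl, rfl⟩ := SAnsP_and_inv hA
      exact ⟨_, _, SAnsP.and h1 (SAnsP.orl h2), fun C0 U0 Ch hG => ⟨Ch, hG⟩⟩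
    · obtain ⟨C1, U1, C2, U2, h1, h2, rfl, rfl⟩ := SAnsP_and_inv hA
      exact ⟨_, _, SAnsP.and h1 (SAnsP.orr h2), fun C0 U0 Ch hG => ⟨Ch, hG⟩⟩
  | sr5' g1 g2 g3 =>
    intro C' U' hA
    rcases SAnsP_or_inv hA with hA | hA
    · obtain ⟨C1, U1, C2, U2, h1, h2, rfl, rfl⟩ := SAnsP_and_inv hA
      exact ⟨_, _, SAnsP.and (SAnsP.orl h1) h2, fun C0 U0 Ch hG => ⟨Ch, hG⟩⟩
    · obtain ⟨C1, U1, C2, U2, h1, h2, rfl, rfl⟩ := SAnsP_and_inv hA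
      exact ⟨_, _, SAnsP.and (SAnsP.orr h1) h2, fun C0 U0 Ch hG => ⟨Ch, hG⟩⟩
  | andL g1 g1' h2 st ih =>
    intro C' U' hA
    obtain ⟨C1', U1', C2, U2, h1, h2h, rfl, rfl⟩ := SAnsP_and_inv hA
    obtain ⟨C1, U1, hs1, tr1⟩ := ih C1' U1' h1
    refine ⟨C1 ∪ C2, U1 ∪ U2, SAnsP.and hs1 h2h, ?_⟩
    intro C0 U0 Ch hG
    have hG' : GLOB P g (C1 ∪ (C2 ∪ C0)) (U1 ∪ (U2 ∪ U0)) Ch :=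
      glob_congr (Set.union_assoc _ _ _) (Set.union_assoc _ _ _) hG
    obtain ⟨Ch', hCh'⟩ := tr1 (C2 ∪ C0) (U2 ∪ U0) Ch hG'
    exact ⟨Ch', glob_congr (Set.union_assoc _ _ _).symm (Set.union_assoc _ _ _).symm hCh'⟩
  | andR g1 h2 h2' st ih =>
    intro C' U' hA
    obtain ⟨C1, U1, C2', U2', h1, h2h, rfl, rfl⟩ := SAnsP_and_inv hA
    obtain ⟨C2, U2, hs2, tr2⟩ := ih C2' U2' h2h
    refine ⟨C1 ∪ C2, U1 ∪ U2, SAnsP.and h1 hs2, ?_⟩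
    intro C0 U0 Ch hG
    have hG' : GLOB P g (C2 ∪ (C1 ∪ C0)) (U2 ∪ (U1 ∪ U0)) Ch :=
      glob_congr (by ext x; simp; tauto) (by ext c; simp; tauto) hG
    obtain ⟨Ch', hCh'⟩ := tr2 (C1 ∪ C0) (U1 ∪ U0) Ch hG'
    exact ⟨Ch', glob_congr (by ext x; simp; tauto) (by ext c; simp; tauto) hCh'⟩
  | orL g1 g1' h2 st ih =>
    intro C' U' hA
    rcases SAnsP_or_inv hA with hA | hA
    · obtain ⟨C1, U1, hs1, tr1⟩ := ih C' U' hA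
      exact ⟨C1, U1, SAnsP.orl hs1, tr1⟩
    · exact ⟨C', U', SAnsP.orr hA, fun C0 U0 Ch hG => ⟨Ch, hG⟩⟩
  | orR g1 h2 h2' st ih =>
    intro C' U' hA
    rcases SAnsP_or_inv hA with hA | hA
    · exact ⟨C', U', SAnsP.orl hA, fun C0 U0 Ch hG => ⟨Ch, hG⟩⟩
    · obtain ⟨C2, U2, hs2, tr2⟩ := ih C' U' hA
      exact ⟨C2, U2, SAnsP.orr hs2, tr2⟩

/-! #### Goal well-formedness (valid chains, consistent T-sets) -/

def GOK (g : Lit α) : GGoal α → Prop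
  | .F => True
  | .T C0 => ConsistentSet C0
  | .lit l anc => ValidChain (anc ++ [l]) ∧ (anc ++ [l]).head? = some g
  | .and g1 g2 => GOK g g1 ∧ GOK g g2
  | .or g1 g2 => GOK g g1 ∧ GOK g g2

theorem GOK_disjList {g : Lit α} {L : List (GGoal α)} (h : ∀ gg ∈ L, GOK g gg) :
    GOK g (disjList L) := by
  induction L with
  | nil => trivial
  | cons g1 L ih =>
    cases L with
    | nil => exact h g1 (by simp)
    | cons g2 L' =>
      exact ⟨h g1 (by simp), ih (fun gg hgg => h gg (List.mem_cons_of_mem _ hgg))⟩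

theorem GOK_conjList {g : Lit α} {ch : List (Lit α)} {L : List (GGoal α)}
    (hch : ConsistentSet {x | x ∈ ch}) (h : ∀ gg ∈ L, GOK g gg) :
    GOK g (conjList ch L) := by
  induction L with
  | nil => exact hch
  | cons g1 L ih =>
    cases L with
    | nil => exact h g1 (by simp)
    | cons g2 L' =>
      exact ⟨h g1 (by simp), ih (fun gg hgg => h gg (List.mem_cons_of_mem _ hgg))⟩

theorem GOK_step [DecidableEq α] {P : List (PRule α)} {g : Lit α} {h h' : GGoal α}
    (st : GStep P h h') (hk : GOK g h) : GOK g h' := by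
  induction st with
  | litPos a anc hL =>
    obtain ⟨hv, hh⟩ := hk
    refine GOK_disjList ?_
    intro gg hgg
    obtain ⟨r, hr, rfl⟩ := List.mem_map.1 hgg
    refine GOK_conjList (consistent_of_valid_noLoop hv hL) ?_
    intro gg' hgg'
    obtain ⟨l, hl, rfl⟩ := List.mem_map.1 hgg'
    refine ⟨validChain_extend hv hL l, ?_⟩
    rw [head?_append_left _ _ (by simp)]
    exact hh
  | litNeg a anc hL =>
    obtain ⟨hv, hh⟩ := hk
    refine GOK_conjList (consistent_of_valid_noLoop hv hL) ?_
    intro gg hgg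
    obtain ⟨r, hr, rfl⟩ := List.mem_map.1 hgg
    refine GOK_disjList ?_
    intro gg' hgg'
    obtain ⟨l, hl, rfl⟩ := List.mem_map.1 hgg'
    refine ⟨validChain_extend hv hL l.compl, ?_⟩
    rw [head?_append_left _ _ (by simp)]
    exact hh
  | lr1 l anc hF => trivial
  | lr2 l anc hS => exact consistent_of_valid_succ hk.1 hS
  | sr1 g1 => exact hk.2
  | sr1' g1 => exact hk.1
  | sr2 g1 => trivial
  | sr2' g1 => trivial
  | sr3 C1 C2 hcons => exact hcons
  | sr4 C1 C2 hcons => trivial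
  | sr5 g1 g2 g3 => exact ⟨⟨hk.1, hk.2.1⟩, ⟨hk.1, hk.2.2⟩⟩
  | sr5' g1 g2 g3 => exact ⟨⟨hk.1.1, hk.2⟩, ⟨hk.1.2, hk.2⟩⟩
  | andL g1 g1' h2 st ih => exact ⟨ih hk.1, hk.2⟩
  | andR g1 h2 h2' st ih => exact ⟨hk.1, ih hk.2⟩
  | orL g1 g1' h2 st ih => exact ⟨ih hk.1, hk.2⟩
  | orR g1 h2 h2' st ih => exact ⟨hk.1, ih hk.2⟩

/-! #### PART C : semantic extraction from a global witness -/

def litNegB : Lit α → Bool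
  | .neg _ => true
  | .pos _ => false

theorem len_le_foldr (Ch : List (List (Lit α))) :
    ∀ c ∈ Ch, c.length ≤ (Ch.map List.length).foldr max 0 := by
  induction Ch with
  | nil => simp
  | cons c0 Ch ih =>
    intro c hc
    rcases List.mem_cons.1 hc with rfl | hc
    · simp [Nat.le_max_left]
    · exact le_trans (ih c hc) (by simp [Nat.le_max_right])

/-- Unfolding a succeeding loop ending a chain: the endpoint occurs internally,
and unless the endpoint is negative, a negative literal lies strictly inside. -/
theorem succ_unfold {c d : List (Lit α)} {x : Lit α} (hs : SuccLoopChain c)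
    (hc : c = d ++ [x]) :
    ∃ t mid, c = t ++ x :: (mid ++ [x]) ∧ (x.isNeg ∨ ∃ y ∈ mid, y.isNeg) := by
  obtain ⟨seg, ⟨t0, ht0⟩, hNE⟩ := hs
  have hlen2 : 2 ≤ seg.length := by rcases hNE with h | h <;> exact h.1
  have hhg : seg.head? = seg.getLast? := by rcases hNE with h | h <;> exact h.2.1
  obtain ⟨s0, ss, rfl⟩ : ∃ s0 ss, seg = s0 :: ss := by
    cases seg with
    | nil => simp at hlen2
    | cons s0 ss => exact ⟨s0, ss, rfl⟩
  obtain ⟨mid, v, rfl⟩ : ∃ mid v, ss = mid ++ [v] := by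
    rcases ss.eq_nil_or_concat with h | ⟨mid, v, h⟩
    · subst h; simp at hlen2
    · exact ⟨mid, v, by simpa using h⟩
  have hlseg : (s0 :: (mid ++ [v])).getLast? = some v := by
    rw [show s0 :: (mid ++ [v]) = (s0 :: mid) ++ [v] by simp, List.getLast?_concat]
  have hs0 : s0 = v := by rw [hlseg] at hhg; simpa using hhg
  have hlastc : c.getLast? = some v := by
    rw [← ht0, List.getLast?_append_of_ne_nil _ (by simp), hlseg]
  have hvx : v = x := by
    rw [hc, List.getLast?_concat] at hlastc
    simpa using hlastc.symm
  subst x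
  subst s0
  refine ⟨t0, mid, by rw [← ht0], ?_⟩
  rcases hNE with h | h
  · exact Or.inl (h.2.2 v (by simp))
  · have hnp := h.2.2.1
    have : ∃ z ∈ v :: (mid ++ [v]), ¬ z.isPos := by
      by_contra hcon
      push_neg at hcon
      exact hnp ⟨hlen2, hhg, hcon⟩
    obtain ⟨z, hz, hznp⟩ := this
    have hzneg : z.isNeg := by cases z <;> simp_all [Lit.isPos, Lit.isNeg]
    rcases List.mem_cons.1 hz with rfl | hz
    · exact Or.inl hzneg
    · rcases List.mem_append.1 hz with hz | hz
      · exact Or.inr ⟨z, hz, hzneg⟩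
      · rcases List.mem_singleton.1 hz with rfl
        exact Or.inl hzneg

theorem glob_extract [DecidableEq α] {P : List (PRule α)} {g : Lit α} {C : Set (Lit α)}
    {Ch : List (List (Lit α))} (hG : GLOB P g C ∅ Ch) :
    g ∈ C ∧ (∀ a, Lit.pos a ∈ C → Derives P {b | Lit.neg b ∈ C} a) ∧
    (∀ a, Lit.neg a ∈ C → ∀ r ∈ P, r.head = a →
      (∃ b ∈ r.pos, Lit.neg b ∈ C) ∨ (∃ c ∈ r.neg, Lit.pos c ∈ C)) := by
  obtain ⟨hne, hU, hCs, hheads, hconds⟩ := hG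
  set M := (Ch.map List.length).foldr max 0 with hM
  have hbound : ∀ c ∈ Ch, c.length ≤ M := len_le_foldr Ch
  have hmemC : ∀ {x : Lit α} {c : List (Lit α)}, c ∈ Ch → x ∈ c → x ∈ C := by
    intro x c hc hx
    rw [hCs]; exact ⟨c, hc, hx⟩
  -- g ∈ C
  have hgC : g ∈ C := by
    obtain ⟨c, hc⟩ : ∃ c, c ∈ Ch := by
      cases Ch with
      | nil => exact absurd rfl hne
      | cons c0 Ch' => exact ⟨c0, by simp⟩
    obtain ⟨hcne, hch⟩ := hheads c hc
    exact hmemC hc (List.mem_of_mem_head? (by rw [hch]; simp))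
  -- handling a positive NodeJust via the measure induction
  have KEY : ∀ n, ∀ c ∈ Ch, ∀ d a e, c = d ++ Lit.pos a :: e →
      (d.countP litNegB) * (M + 1) + (M - d.length) ≤ n →
      Derives P {b | Lit.neg b ∈ C} a := by
    intro n
    induction n using Nat.strong_induction_on with
    | _ n IH =>
      intro c hc d a e hsplit hm
      have handle_nj : NodeJust P Ch d (Lit.pos a) → Derives P {b | Lit.neg b ∈ C} a := by
        rintro ⟨r, hrP, hhead, hbody⟩
        rw [← hhead]
        refine Derives.step r hrP ?_ ?_
        · intro b hb
          obtain ⟨c', hc', hp⟩ := hbody (Lit.pos b) (mem_bodyLits.2 (Or.inl ⟨b, hb, rfl⟩))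
          obtain ⟨s, hsf⟩ := hp
          have hsplit' : c' = (d ++ [Lit.pos a]) ++ Lit.pos b :: s := by
            rw [← hsf]; simp
          have hlen : d.length + 2 ≤ M := by
            have := hbound c' hc'
            rw [hsplit'] at this
            simp at this
            omega
          have hcount : (d ++ [Lit.pos a]).countP litNegB = d.countP litNegB := by
            simp [List.countP_append, litNegB]
          set A := d.countP litNegB * (M + 1) with hA
          have hlt : A + (M - (d.length + 1)) < n := by omega
          refine IH _ hlt c' hc' (d ++ [Lit.pos a]) b s hsplit' ?_
          rw [hcount]
          simp only [List.length_append, List.length_cons, List.length_nil]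
          omega
        · intro cc hcc
          obtain ⟨c', hc', hp⟩ := hbody (Lit.neg cc) (mem_bodyLits.2 (Or.inr ⟨cc, hcc, rfl⟩))
          exact hmemC hc' (hp.subset (by simp))
      rcases (hconds c hc) d (Lit.pos a) e hsplit with ⟨hint, hlast⟩
      by_cases he : e = []
      · subst he
        rcases hlast rfl with hin | hsucc | hnj
        · simp at hin
        · obtain ⟨t, mid, hcshape, hdisj⟩ := succ_unfold hsucc hsplit
          rcases hdisj with hneg | ⟨y, hymid, hyneg⟩
          · simp [Lit.isNeg] at hneg
          · -- recurse at the internal occurrence, with strictly fewer negatives before it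
            have hd : d = t ++ Lit.pos a :: mid := by
              have h2 : d ++ [Lit.pos a] = (t ++ Lit.pos a :: mid) ++ [Lit.pos a] := by
                rw [← hsplit, hcshape]; simp
              exact (List.append_inj' h2 rfl).1
            have hylit : litNegB y = true := by
              cases y
              · simp [Lit.isNeg] at hyneg
              · simp [litNegB]
            have hcnt : t.countP litNegB + 1 ≤ d.countP litNegB := by
              rw [hd]
              have : 0 < mid.countP litNegB := List.countP_pos_iff.2 ⟨y, hymid, hylit⟩
              simp [List.countP_append, List.countP_cons]
              omega
            have hmul : (t.countP litNegB + 1) * (M + 1) ≤ d.countP litNegB * (M + 1) :=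
              Nat.mul_le_mul_right _ hcnt
            have e1 : (t.countP litNegB + 1) * (M + 1)
                = t.countP litNegB * (M + 1) + (M + 1) := by ring
            rw [e1] at hmul
            set A := t.countP litNegB * (M + 1) with hA
            set B := d.countP litNegB * (M + 1) with hB
            have hlt : A + (M - t.length) < n := by omega
            exact IH _ hlt c hc t a (mid ++ [Lit.pos a]) hcshape (le_refl _)
        · exact handle_nj hnj
      · exact handle_nj (hint he)
  -- positive literal justification
  have hjpos : ∀ a, Lit.pos a ∈ C → Derives P {b | Lit.neg b ∈ C} a := by
    intro a ha
    rw [hCs] at ha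
    obtain ⟨c, hc, hac⟩ := ha
    obtain ⟨d, e, hde⟩ := List.append_of_mem hac
    exact KEY _ c hc d a e hde (le_refl _)
  -- negative literal justification
  have hjneg : ∀ a, Lit.neg a ∈ C → ∀ r ∈ P, r.head = a →
      (∃ b ∈ r.pos, Lit.neg b ∈ C) ∨ (∃ cc ∈ r.neg, Lit.pos cc ∈ C) := by
    have njneg : ∀ d a, NodeJust P Ch d (Lit.neg a) → ∀ r ∈ P, r.head = a →
        (∃ b ∈ r.pos, Lit.neg b ∈ C) ∨ (∃ cc ∈ r.neg, Lit.pos cc ∈ C) := by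
      intro d a hnj r hr hh
      obtain ⟨l, hl, c', hc', hp⟩ := hnj r hr hh
      have hlc : l.compl ∈ C := hmemC hc' (hp.subset (by simp))
      rcases mem_bodyLits.1 hl with ⟨b, hb, rfl⟩ | ⟨cc, hcc, rfl⟩
      · exact Or.inl ⟨b, hb, hlc⟩
      · exact Or.inr ⟨cc, hcc, hlc⟩
    intro a ha
    rw [hCs] at ha
    obtain ⟨c, hc, hac⟩ := ha
    obtain ⟨d, e, hde⟩ := List.append_of_mem hac
    rcases (hconds c hc) d (Lit.neg a) e hde with ⟨hint, hlast⟩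
    by_cases he : e = []
    · subst he
      rcases hlast rfl with hin | hsucc | hnj
      · simp at hin
      · obtain ⟨t, mid, hcshape, _⟩ := succ_unfold hsucc hde
        rcases (hconds c hc) t (Lit.neg a) (mid ++ [Lit.neg a]) hcshape with ⟨hint2, _⟩
        exact njneg t a (hint2 (by simp))
      · exact njneg d a hnj
    · exact njneg d a (hint he)
  exact ⟨hgC, hjpos, hjneg⟩

/-! #### Assembling the invariants along the rewrite sequence -/

theorem GOK_steps [DecidableEq α] {P : List (PRule α)} {g : Lit α} {h h' : GGoal α}
    (st : GSteps P h h') (hk : GOK g h) : GOK g h' := by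
  induction st with
  | refl => exact hk
  | tail _ s ih => exact GOK_step s ih

theorem inv_steps [DecidableEq α] {P : List (PRule α)} {g : Lit α} {h h' : GGoal α}
    (st : GSteps P h h')
    (inv : ∀ C U, SAnsP h C U → ∃ Ch, GLOB P g C U Ch) :
    ∀ C U, SAnsP h' C U → ∃ Ch, GLOB P g C U Ch := by
  induction st with
  | refl => exact inv
  | tail _ s ih =>
    intro C' U' hA
    obtain ⟨C, U, hS, tr⟩ := step_sim s C' U' hA
    obtain ⟨Ch, hCh⟩ := ih C U hS
    have := tr ∅ ∅ Ch (by simpa using hCh)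
    simpa using this

theorem SAnsP_disjTT {Cs : List (Set (Lit α))} {C : Set (Lit α)} (hC : C ∈ Cs) :
    SAnsP (disjTT Cs) C ∅ := by
  induction Cs with
  | nil => cases hC
  | cons C1 Cs ih =>
    rcases List.mem_cons.1 hC with h | h
    · subst h
      cases Cs with
      | nil => exact SAnsP.t C
      | cons C2 Cs' => exact SAnsP.orl (SAnsP.t C)
    · cases Cs with
      | nil => cases h
      | cons C2 Cs' => exact SAnsP.orr (ih h)

theorem GOK_disjTT {g : Lit α} {Cs : List (Set (Lit α))} (hk : GOK g (disjTT Cs)) :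
    ∀ C ∈ Cs, ConsistentSet C := by
  induction Cs with
  | nil => intro C hC; cases hC
  | cons C1 Cs ih =>
    intro C hC
    rcases List.mem_cons.1 hC with h | h
    · subst h
      cases Cs with
      | nil => exact hk
      | cons C2 Cs' => exact hk.1
    · cases Cs with
      | nil => cases h
      | cons C2 Cs' => exact ih hk.2 C h

end GRS
/-- Soundness of goal rewrite systems: for any literal `g` and any rewrite
sequence `g →* T(C₁) ∨ … ∨ T(C_m)`, there exists, for each `i ∈ [1..m]`, a partial
stable model `Mᵢ` of `P` such that `g ∈ Cᵢ ⊆ Mᵢ`. -/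
theorem goal_rewrite_soundness {α : Type} [DecidableEq α] (P : List (PRule α))
    (g : Lit α) (Cs : List (Set (Lit α))) (hne : Cs ≠ [])
    (h : GSteps P (initGoal g) (disjTT Cs)) :
    ∀ C ∈ Cs, ∃ M : Set (Lit α), IsPSM P M ∧ g ∈ C ∧ C ⊆ M := by
  intro C hC
  have hGOK0 : GRS.GOK g (initGoal g) := by
    refine ⟨?_, by simp⟩
    intro d x e heq hne'
    cases d with
    | nil =>
      simp at heq
      obtain ⟨-, h2⟩ := heq
      exact absurd h2 hne'
    | cons d0 d' => simp at heq
  have hGOK : GRS.GOK g (disjTT Cs) := GRS.GOK_steps h hGOK0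
  have hInv0 : ∀ C U, GRS.SAnsP (initGoal g) C U → ∃ Ch, GRS.GLOB P g C U Ch := by
    intro C U hA
    obtain ⟨rfl, rfl⟩ := GRS.SAnsP_lit_inv hA
    refine ⟨[[g]], by simp, ?_, ?_, ?_, ?_⟩
    · intro u hu
      simp only [Set.mem_singleton_iff] at hu
      simp [hu]
    · ext x; simp
    · intro c hc
      simp only [List.mem_singleton] at hc
      subst hc
      exact ⟨by simp, by simp⟩
    · intro c hc
      simp only [List.mem_singleton] at hc
      subst hc
      intro d x e hsplit
      cases d with
      | nil =>
        simp at hsplit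
        obtain ⟨rfl, rfl⟩ := hsplit
        exact ⟨fun he => absurd rfl he, fun _ => Or.inl (by simp)⟩
      | cons d0 d' => simp at hsplit
  obtain ⟨Ch, hCh⟩ := GRS.inv_steps h hInv0 C ∅ (GRS.SAnsP_disjTT hC)
  have hcons := GRS.GOK_disjTT hGOK C hC
  obtain ⟨hgC, hjpos, hjneg⟩ := GRS.glob_extract hCh
  obtain ⟨M, hPSM, hCM⟩ := GRS.psm_of_good P C hcons hjpos hjneg
  exact ⟨M, hPSM, hgC, hCM⟩
end

section
/- Termination: for any finite normal program P, the goal rewrite system ⟨Q_L, R_P, →⟩ is terminating, i.e., there exists no infinite rewrite sequence Q₁ → Q₂ → Q₃ → ⋯. -/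
namespace TermAux

variable {α : Type} [DecidableEq α]

/-- The finite set of literals that can ever appear in an expansion: body literals
of rules of `P` and their complements. -/
def SLits (P : List (PRule α)) : Finset (Lit α) :=
  ((P.map fun r => bodyLits r ++ (bodyLits r).map Lit.compl).flatten).toFinset

/-- Number of rules. -/
def Mnum (P : List (PRule α)) : ℕ := P.length

/-- Bound on body lengths. -/
def Jnum (P : List (PRule α)) : ℕ := (P.map fun r => (bodyLits r).length).sum

/-- The step function of the literal interpretation. -/
def Ffun (P : List (PRule α)) (x : ℕ) : ℕ :=
  ((Mnum P + Jnum P + 2) * (x + 2)) ^ (Mnum P + Jnum P + 2) + x + 5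

/-- The literal interpretation at level `k`. -/
def Wfun (P : List (PRule α)) (k : ℕ) : ℕ := (Ffun P)^[k] 3

/-- The number of "fresh" literals with respect to a chain. -/
def kOf (P : List (PRule α)) (c : List (Lit α)) : ℕ :=
  (SLits P \ c.toFinset).card

open Classical in
/-- The termination measure. -/
noncomputable def mu (P : List (PRule α)) : GGoal α → ℕ
  | .F => 2
  | .T _ => 2
  | .lit l anc =>
      if LoopChain (anc ++ [l]) then 3 else Wfun P (kOf P (anc ++ [l]) + 1)
  | .and g h => mu P g * mu P h
  | .or g h => mu P g + mu P h + 1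

lemma Wfun_succ (P : List (PRule α)) (k : ℕ) :
    Wfun P (k + 1) = Ffun P (Wfun P k) := Function.iterate_succ_apply' _ _ _

lemma le_Ffun (P : List (PRule α)) (x : ℕ) : x ≤ Ffun P x := by
  unfold Ffun; omega

lemma three_le_Wfun (P : List (PRule α)) (k : ℕ) : 3 ≤ Wfun P k := by
  induction k with
  | zero => simp [Wfun]
  | succ k ih => rw [Wfun_succ]; exact ih.trans (le_Ffun P _)

lemma Wfun_mono (P : List (PRule α)) {i j : ℕ} (h : i ≤ j) :
    Wfun P i ≤ Wfun P j := by
  induction j with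
  | zero => simp_all
  | succ j ih =>
      rcases Nat.lt_or_ge i (j + 1) with h' | h'
      · exact (ih (by omega)).trans (by rw [Wfun_succ]; exact le_Ffun P _)
      · have : i = j + 1 := by omega
        simp [this]

lemma two_le_mu (P : List (PRule α)) (g : GGoal α) : 2 ≤ mu P g := by
  induction g with
  | F => simp [mu]
  | T C => simp [mu]
  | lit l anc =>
      simp only [mu]
      split
      · omega
      · have := three_le_Wfun P (kOf P (anc ++ [l]) + 1); omega
  | and g h ihg ihh => simp only [mu]; nlinarith
  | or g h ihg ihh => simp only [mu]; omega

/-- If the last literal already occurs earlier on the chain, we have a loop. -/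
lemma loop_of_mem {c : List (Lit α)} {l : Lit α} (hl : l ∈ c) :
    LoopChain (c ++ [l]) := by
  obtain ⟨u, v, rfl⟩ := List.append_of_mem hl
  set seg : List (Lit α) := l :: (v ++ [l]) with hseg
  have hsuf : seg <:+ (u ++ l :: v) ++ [l] := ⟨u, by simp [hseg]⟩
  have hlen : 2 ≤ seg.length := by simp [hseg]
  have hhead : seg.head? = some l := rfl
  have hlast : seg.getLast? = some l := by
    have : seg = (l :: v) ++ [l] := by simp [hseg]
    rw [this, List.getLast?_concat]
  have heq : seg.head? = seg.getLast? := by rw [hhead, hlast]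
  by_cases hp : ∀ x ∈ seg, x.isPos
  · exact Or.inl ⟨seg, hsuf, Or.inl ⟨hlen, heq, hp⟩⟩
  · by_cases hn : ∀ x ∈ seg, x.isNeg
    · exact Or.inr ⟨seg, hsuf, Or.inl ⟨hlen, heq, hn⟩⟩
    · exact Or.inr ⟨seg, hsuf, Or.inr ⟨hlen, heq,
        fun hc => hp hc.2.2, fun hc => hn hc.2.2⟩⟩

lemma mem_SLits_of_body {P : List (PRule α)} {r : PRule α} {l : Lit α}
    (hr : r ∈ P) (hl : l ∈ bodyLits r) : l ∈ SLits P := by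
  simp only [SLits, List.mem_toFinset, List.mem_flatten]
  exact ⟨bodyLits r ++ (bodyLits r).map Lit.compl,
    List.mem_map_of_mem hr, by simp [hl]⟩

lemma mem_SLits_of_body_compl {P : List (PRule α)} {r : PRule α} {l : Lit α}
    (hr : r ∈ P) (hl : l ∈ bodyLits r) : l.compl ∈ SLits P := by
  simp only [SLits, List.mem_toFinset, List.mem_flatten]
  refine ⟨bodyLits r ++ (bodyLits r).map Lit.compl,
    List.mem_map_of_mem hr, ?_⟩
  simp only [List.mem_append, List.mem_map]
  exact Or.inr ⟨l, hl, rfl⟩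

/-- Key bound on the measure of a child literal created by an expansion. -/
lemma child_mu_le {P : List (PRule α)} {l : Lit α} (chain : List (Lit α))
    (hl : l ∈ SLits P) :
    mu P (GGoal.lit l chain) ≤ Wfun P (kOf P chain) := by
  simp only [mu]
  split
  · exact three_le_Wfun P _
  · rename_i hnl
    have hmem : l ∉ chain := fun hm => hnl (loop_of_mem hm)
    have hlt : kOf P (chain ++ [l]) < kOf P chain := by
      apply Finset.card_lt_card
      constructor
      · intro x hx
        simp only [Finset.mem_sdiff, List.toFinset_append] at hx ⊢
        refine ⟨hx.1, fun hc => hx.2 (Finset.mem_union_left _ hc)⟩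
      · intro hsub
        have h1 : l ∈ SLits P \ chain.toFinset := by
          simp [Finset.mem_sdiff, List.mem_toFinset, hl, hmem]
        have h2 := hsub h1
        simp [Finset.mem_sdiff, List.toFinset_append] at h2
    exact Wfun_mono P (by omega)

lemma mu_disjList_le (P : List (PRule α)) (gs : List (GGoal α)) :
    mu P (disjList gs) ≤ (gs.map (mu P)).sum + gs.length + 2 := by
  induction gs with
  | nil => simp [disjList, mu]
  | cons g gs ih =>
      cases gs with
      | nil => simp [disjList]; omega
      | cons g' gs' =>
          simp only [disjList, mu, List.map_cons, List.sum_cons,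
            List.length_cons] at *
          omega

lemma mu_conjList_eq (P : List (PRule α)) (anc : List (Lit α))
    (gs : List (GGoal α)) (hne : gs ≠ []) :
    mu P (conjList anc gs) = (gs.map (mu P)).prod := by
  induction gs with
  | nil => simp at hne
  | cons g gs ih =>
      cases gs with
      | nil => simp [conjList]
      | cons g' gs' =>
          simp only [conjList, mu, List.map_cons, List.prod_cons] at *
          rw [ih (by simp)]

lemma list_prod_le_pow {L : List ℕ} {B : ℕ} (h : ∀ x ∈ L, x ≤ B) :
    L.prod ≤ B ^ L.length := by
  induction L with
  | nil => simp
  | cons a L ih =>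
      simp only [List.prod_cons, List.length_cons, pow_succ]
      rw [Nat.mul_comm (B ^ L.length) B]
      exact Nat.mul_le_mul (h a (by simp)) (ih fun x hx => h x (by simp [hx]))

lemma list_sum_le_mul {L : List ℕ} {B : ℕ} (h : ∀ x ∈ L, x ≤ B) :
    L.sum ≤ B * L.length := by
  induction L with
  | nil => simp
  | cons a L ih =>
      simp only [List.sum_cons, List.length_cons, Nat.mul_succ]
      have := ih fun x hx => h x (by simp [hx])
      have := h a (by simp)
      omega

lemma body_len_le {P : List (PRule α)} {r : PRule α} (hr : r ∈ P) :
    (bodyLits r).length ≤ Jnum P := by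
  have : (bodyLits r).length ∈ P.map fun r => (bodyLits r).length :=
    List.mem_map_of_mem hr
  exact List.single_le_sum (fun _ _ => Nat.zero_le _) _ this

lemma rulesFor_subset {P : List (PRule α)} {a : α} {r : PRule α}
    (hr : r ∈ rulesFor P a) : r ∈ P := List.mem_of_mem_filter hr

lemma rulesFor_len_le (P : List (PRule α)) (a : α) :
    (rulesFor P a).length ≤ Mnum P := List.length_filter_le _ _

/-- Arithmetic key inequality for the positive expansion. -/
lemma key_pos (P : List (PRule α)) {B : ℕ} (hB : 3 ≤ B) :
    Mnum P * (B ^ Jnum P + 2) + Mnum P + 2 < Ffun P B := by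
  set M := Mnum P; set J := Jnum P
  set X := (M + J + 2) * (B + 2) with hX
  have hX10 : 10 ≤ X := by
    calc 10 = 2 * 5 := rfl
    _ ≤ (M + J + 2) * (B + 2) := Nat.mul_le_mul (by omega) (by omega)
  have hMX : M ≤ X := by
    calc M ≤ (M + J + 2) * 1 := by omega
    _ ≤ X := Nat.mul_le_mul_left _ (by omega)
  have hBX : B ≤ X := by
    calc B ≤ 1 * (B + 2) := by omega
    _ ≤ X := Nat.mul_le_mul_right _ (by omega)
  have h1 : M * B ^ J ≤ X ^ (J + 1) := by
    calc M * B ^ J ≤ X * X ^ J :=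
          Nat.mul_le_mul hMX (Nat.pow_le_pow_left hBX J)
    _ = X ^ (J + 1) := by ring
  have h2 : X ^ (J + 1) ≤ X ^ (M + J + 1) :=
    Nat.pow_le_pow_right (by omega) (by omega)
  have h3 : 3 * M + 2 ≤ X := by
    have : (M + 2) * 5 ≤ X := Nat.mul_le_mul (by omega) (by omega)
    omega
  have h4 : X ≤ X ^ (M + J + 1) :=
    le_trans (by omega) (Nat.le_self_pow (by omega) X)
  have h5 : 2 * X ^ (M + J + 1) ≤ X ^ (M + J + 2) := by
    calc 2 * X ^ (M + J + 1) ≤ X * X ^ (M + J + 1) :=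
          Nat.mul_le_mul_right _ (by omega)
    _ = X ^ (M + J + 2) := by ring
  have heq : M * (B ^ J + 2) + M + 2 = M * B ^ J + (3 * M + 2) := by ring
  have h6 : M * B ^ J + (3 * M + 2) ≤ X ^ (M + J + 2) :=
    calc M * B ^ J + (3 * M + 2)
        ≤ X ^ (M + J + 1) + X ^ (M + J + 1) :=
          Nat.add_le_add (h1.trans h2) (h3.trans h4)
      _ = 2 * X ^ (M + J + 1) := by ring
      _ ≤ X ^ (M + J + 2) := h5
  have h7 : Ffun P B = X ^ (M + J + 2) + B + 5 := rfl
  rw [heq, h7]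
  omega

/-- Arithmetic key inequality for the negative expansion. -/
lemma key_neg (P : List (PRule α)) {B : ℕ} (hB : 3 ≤ B) :
    (Jnum P * B + Jnum P + 2) ^ Mnum P + 2 < Ffun P B := by
  set M := Mnum P; set J := Jnum P
  set X := (M + J + 2) * (B + 2) with hX
  have hbase : J * B + J + 2 ≤ X := by
    calc J * B + J + 2 ≤ J * (B + 2) + 2 * (B + 2) := by nlinarith
    _ = (J + 2) * (B + 2) := by ring
    _ ≤ X := Nat.mul_le_mul_right _ (by omega)
  have h1 : (J * B + J + 2) ^ M ≤ X ^ M := Nat.pow_le_pow_left hbase M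
  have h2 : X ^ M ≤ X ^ (M + J + 2) :=
    Nat.pow_le_pow_right (by positivity) (by omega)
  calc (J * B + J + 2) ^ M + 2 ≤ X ^ (M + J + 2) + 2 := by omega
  _ < X ^ (M + J + 2) + B + 5 := by omega
  _ = Ffun P B := rfl

lemma mu_posExp_lt (P : List (PRule α)) (a : α) (chain : List (Lit α)) :
    mu P (posExp P chain a) < Wfun P (kOf P chain + 1) := by
  set k := kOf P chain
  set B := Wfun P k with hBdef
  have hB3 : 3 ≤ B := three_le_Wfun P k
  set L := (rulesFor P a).map
    (fun r => conjList chain ((bodyLits r).map (fun l => GGoal.lit l chain))) with hL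
  have hElem : ∀ g ∈ L, mu P g ≤ B ^ Jnum P + 2 := by
    intro g hg
    rw [hL] at hg
    obtain ⟨r, hr, rfl⟩ := List.mem_map.mp hg
    have hrP : r ∈ P := rulesFor_subset hr
    rcases eq_or_ne (bodyLits r) [] with hb | hb
    · simp only [hb, List.map_nil, conjList, mu]
      omega
    · rw [mu_conjList_eq P chain _ (by simpa using hb)]
      have hchild : ∀ x ∈ ((bodyLits r).map
          (fun l => GGoal.lit l chain)).map (mu P), x ≤ B := by
        intro x hx
        simp only [List.map_map, List.mem_map, Function.comp] at hx
        obtain ⟨l, hl, rfl⟩ := hx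
        exact child_mu_le chain (mem_SLits_of_body hrP hl)
      have := list_prod_le_pow hchild
      simp only [List.length_map] at this
      calc (((bodyLits r).map fun l => GGoal.lit l chain).map (mu P)).prod
          ≤ B ^ (bodyLits r).length := this
      _ ≤ B ^ Jnum P := Nat.pow_le_pow_right (by omega) (body_len_le hrP)
      _ ≤ B ^ Jnum P + 2 := by omega
  have hsum : (L.map (mu P)).sum ≤ (B ^ Jnum P + 2) * L.length := by
    have : (L.map (mu P)).sum ≤ (B ^ Jnum P + 2) * (L.map (mu P)).length := by
      apply list_sum_le_mul
      intro x hx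
      obtain ⟨g, hg, rfl⟩ := List.mem_map.mp hx
      exact hElem g hg
    rwa [List.length_map] at this
  have hlen : L.length ≤ Mnum P := by
    rw [hL]; simpa [List.length_map] using rulesFor_len_le P a
  have hdisj := mu_disjList_le P L
  have hbound : mu P (disjList L) ≤ Mnum P * (B ^ Jnum P + 2) + Mnum P + 2 := by
    have : (B ^ Jnum P + 2) * L.length ≤ (B ^ Jnum P + 2) * Mnum P :=
      Nat.mul_le_mul_left _ hlen
    calc mu P (disjList L) ≤ (L.map (mu P)).sum + L.length + 2 := hdisj
    _ ≤ (B ^ Jnum P + 2) * Mnum P + Mnum P + 2 := by omega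
    _ = Mnum P * (B ^ Jnum P + 2) + Mnum P + 2 := by ring_nf
  have hkey := key_pos P hB3
  have : mu P (posExp P chain a) = mu P (disjList L) := by rw [posExp, hL]
  rw [this, Wfun_succ, ← hBdef]
  omega

lemma mu_negExp_lt (P : List (PRule α)) (a : α) (chain : List (Lit α)) :
    mu P (negExp P chain a) < Wfun P (kOf P chain + 1) := by
  set k := kOf P chain
  set B := Wfun P k with hBdef
  have hB3 : 3 ≤ B := three_le_Wfun P k
  set D := Jnum P * B + Jnum P + 2 with hD
  set L := (rulesFor P a).map
    (fun r => disjList ((bodyLits r).map (fun l => GGoal.lit l.compl chain))) with hL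
  have hElem : ∀ g ∈ L, mu P g ≤ D := by
    intro g hg
    rw [hL] at hg
    obtain ⟨r, hr, rfl⟩ := List.mem_map.mp hg
    have hrP : r ∈ P := rulesFor_subset hr
    set cs := (bodyLits r).map (fun l => GGoal.lit l.compl chain) with hcs
    have hchild : ∀ x ∈ cs.map (mu P), x ≤ B := by
      intro x hx
      simp only [hcs, List.map_map, List.mem_map, Function.comp] at hx
      obtain ⟨l, hl, rfl⟩ := hx
      exact child_mu_le chain (mem_SLits_of_body_compl hrP hl)
    have hsum := list_sum_le_mul hchild
    have hlen : cs.length ≤ Jnum P := by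
      simp only [hcs, List.length_map]; exact body_len_le hrP
    have hlenm : (cs.map (mu P)).length = cs.length := List.length_map _
    have := mu_disjList_le P cs
    have hBl : B * (cs.map (mu P)).length ≤ B * Jnum P := by
      rw [hlenm]; exact Nat.mul_le_mul_left _ hlen
    calc mu P (disjList cs) ≤ (cs.map (mu P)).sum + cs.length + 2 := this
    _ ≤ B * Jnum P + Jnum P + 2 := by omega
    _ = D := by rw [hD]; ring_nf
  have hfinal : mu P (conjList chain L) ≤ D ^ Mnum P + 2 := by
    rcases eq_or_ne L [] with hLe | hLe
    · simp only [hLe, conjList, mu]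
      have : 1 ≤ D ^ Mnum P := Nat.one_le_pow _ _ (by omega)
      omega
    · rw [mu_conjList_eq P chain L hLe]
      have hprod : (L.map (mu P)).prod ≤ D ^ (L.map (mu P)).length := by
        apply list_prod_le_pow
        intro x hx
        obtain ⟨g, hg, rfl⟩ := List.mem_map.mp hx
        exact hElem g hg
      have hlen : (L.map (mu P)).length ≤ Mnum P := by
        rw [List.length_map, hL, List.length_map]
        exact rulesFor_len_le P a
      calc (L.map (mu P)).prod ≤ D ^ (L.map (mu P)).length := hprod
      _ ≤ D ^ Mnum P := Nat.pow_le_pow_right (by omega) hlen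
      _ ≤ D ^ Mnum P + 2 := by omega
  have hkey := key_neg P hB3
  rw [← hD] at hkey
  have : mu P (negExp P chain a) = mu P (conjList chain L) := by rw [negExp, hL]
  rw [this, Wfun_succ, ← hBdef]
  omega

/-- The measure strictly decreases along every rewrite step. -/
lemma mu_decr {P : List (PRule α)} {g g' : GGoal α} (h : GStep P g g') :
    mu P g' < mu P g := by
  induction h with
  | litPos a anc hna =>
      have : mu P (GGoal.lit (Lit.pos a) anc)
          = Wfun P (kOf P (anc ++ [Lit.pos a]) + 1) := by
        simp only [mu]; rw [if_neg hna]
      rw [this]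
      exact mu_posExp_lt P a (anc ++ [Lit.pos a])
  | litNeg a anc hna =>
      have : mu P (GGoal.lit (Lit.neg a) anc)
          = Wfun P (kOf P (anc ++ [Lit.neg a]) + 1) := by
        simp only [mu]; rw [if_neg hna]
      rw [this]
      exact mu_negExp_lt P a (anc ++ [Lit.neg a])
  | lr1 l anc hl =>
      simp only [mu]
      split
      · omega
      · have := three_le_Wfun P (kOf P (anc ++ [l]) + 1); omega
  | lr2 l anc hl =>
      simp only [mu]
      split
      · omega
      · have := three_le_Wfun P (kOf P (anc ++ [l]) + 1); omega
  | sr1 g => simp only [mu]; omega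
  | sr1' g => simp only [mu]; omega
  | sr2 g => have := two_le_mu P g; simp only [mu]; omega
  | sr2' g => have := two_le_mu P g; simp only [mu]; omega
  | sr3 C₁ C₂ h => simp [mu]
  | sr4 C₁ C₂ h => simp [mu]
  | sr5 g₁ g₂ g₃ =>
      have := two_le_mu P g₁
      simp only [mu]; nlinarith
  | sr5' g₁ g₂ g₃ =>
      have := two_le_mu P g₃
      simp only [mu]; nlinarith
  | andL g g' h _ ih =>
      have h2 := two_le_mu P h
      simp only [mu]
      exact Nat.mul_lt_mul_of_lt_of_le ih (le_refl _) (by omega)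
  | andR g h h' _ ih =>
      have h2 := two_le_mu P g
      simp only [mu]
      exact Nat.mul_lt_mul_of_le_of_lt (le_refl _) ih (by omega)
  | orL g g' h _ ih => simp only [mu]; omega
  | orR g h h' _ ih => simp only [mu]; omega

end TermAux

/-- Termination: for any finite normal program `P`, the goal rewrite
system `⟨Q_L, R_P, →⟩` is terminating: there is no infinite rewrite sequence
`Q₁ → Q₂ → Q₃ → ⋯`. -/
theorem goal_rewrite_terminating {α : Type} [DecidableEq α] (P : List (PRule α)) :
    ¬ ∃ f : ℕ → GGoal α, ∀ n : ℕ, GStep P (f n) (f (n + 1)) := by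
  rintro ⟨f, hf⟩
  have hdec : ∀ n, TermAux.mu P (f (n + 1)) < TermAux.mu P (f n) :=
    fun n => TermAux.mu_decr (hf n)
  have hbound : ∀ n, TermAux.mu P (f n) + n ≤ TermAux.mu P (f 0) := by
    intro n
    induction n with
    | zero => omega
    | succ n ih => have := hdec n; omega
  have := hbound (TermAux.mu P (f 0) + 1)
  omega
end

section
/- Soundness of recycling (half of the main theorem): for every i ≥ 0, the rewrite system R^i_P is sound; that is, for any literal g and any rewrite sequence g →_{R^i} T(C₁) ∨ … ∨ T(Cₙ), and for each C_j (j ∈ [1..n]), there exists a partial stable model M of P such that g ∈ C_j ⊆ M. -/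
/-- A computed rule for a literal: either `p → F`, or `p → T(C₁) ∨ … ∨ T(Cₙ)`. -/
inductive CRule (α : Type) where
  | fail : CRule α
  | succ : List (Set (Lit α)) → CRule α

/-- The right-hand side of the recycling rule RC at a literal with rewrite chain `chain`
(whose set of literals is `G`), for a computed rule with contexts `Ds`:
`T(G ∪ D'₁) ∨ … ∨ T(G ∪ D'_{k'})` where the `D'ᵢ` are those `D ∈ Ds` with `D ∪ G` consistent. -/
noncomputable def recycleRHS {α : Type} (chain : List (Lit α)) (Ds : List (Set (Lit α))) : GGoal α :=
  disjTT ((Ds.filter (fun D =>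
      @decide (ConsistentSet ({x | x ∈ chain} ∪ D)) (Classical.propDecidable _))).map
    (fun D => {x | x ∈ chain} ∪ D))

/-- One rewrite step of a goal rewrite system with computed rules `Δ`: literals with a
computed rule use it (via the recycling rule RC), the others use their program rule;
simplification and loop rules are unchanged. -/
inductive GStepC {α : Type} [DecidableEq α] (P : List (PRule α))
    (Δ : Lit α → Option (CRule α)) : GGoal α → GGoal α → Prop
  | litPos (a : α) (anc : List (Lit α)) (hΔ : Δ (Lit.pos a) = none)
      (h : ¬ LoopChain (anc ++ [Lit.pos a])) :
      GStepC P Δ (.lit (.pos a) anc) (posExp P (anc ++ [Lit.pos a]) a)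
  | litNeg (a : α) (anc : List (Lit α)) (hΔ : Δ (Lit.neg a) = none)
      (h : ¬ LoopChain (anc ++ [Lit.neg a])) :
      GStepC P Δ (.lit (.neg a) anc) (negExp P (anc ++ [Lit.neg a]) a)
  | compFail (l : Lit α) (anc : List (Lit α)) (hΔ : Δ l = some CRule.fail)
      (h : ¬ LoopChain (anc ++ [l])) :
      GStepC P Δ (.lit l anc) .F
  | recycle (l : Lit α) (anc : List (Lit α)) (Ds : List (Set (Lit α)))
      (hΔ : Δ l = some (CRule.succ Ds)) (h : ¬ LoopChain (anc ++ [l])) :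
      GStepC P Δ (.lit l anc) (recycleRHS (anc ++ [l]) Ds)
  | lr1 (l : Lit α) (anc : List (Lit α)) (h : FailLoopChain (anc ++ [l])) :
      GStepC P Δ (.lit l anc) .F
  | lr2 (l : Lit α) (anc : List (Lit α)) (h : SuccLoopChain (anc ++ [l])) :
      GStepC P Δ (.lit l anc) (.T {x | x ∈ anc ++ [l]})
  | sr1 (g : GGoal α) : GStepC P Δ (.or .F g) g
  | sr1' (g : GGoal α) : GStepC P Δ (.or g .F) g
  | sr2 (g : GGoal α) : GStepC P Δ (.and .F g) .F
  | sr2' (g : GGoal α) : GStepC P Δ (.and g .F) .F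
  | sr3 (C₁ C₂ : Set (Lit α)) (h : ConsistentSet (C₁ ∪ C₂)) :
      GStepC P Δ (.and (.T C₁) (.T C₂)) (.T (C₁ ∪ C₂))
  | sr4 (C₁ C₂ : Set (Lit α)) (h : ¬ ConsistentSet (C₁ ∪ C₂)) :
      GStepC P Δ (.and (.T C₁) (.T C₂)) .F
  | sr5 (g₁ g₂ g₃ : GGoal α) :
      GStepC P Δ (.and g₁ (.or g₂ g₃)) (.or (.and g₁ g₂) (.and g₁ g₃))
  | sr5' (g₁ g₂ g₃ : GGoal α) :
      GStepC P Δ (.and (.or g₁ g₂) g₃) (.or (.and g₁ g₃) (.and g₂ g₃))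
  | andL (g g' h : GGoal α) : GStepC P Δ g g' → GStepC P Δ (.and g h) (.and g' h)
  | andR (g h h' : GGoal α) : GStepC P Δ h h' → GStepC P Δ (.and g h) (.and g h')
  | orL (g g' h : GGoal α) : GStepC P Δ g g' → GStepC P Δ (.or g h) (.or g' h)
  | orR (g h h' : GGoal α) : GStepC P Δ h h' → GStepC P Δ (.or g h) (.or g h')

/-- Rewrite sequences in a system with computed rules. -/
def GStepsC {α : Type} [DecidableEq α] (P : List (PRule α))
    (Δ : Lit α → Option (CRule α)) : GGoal α → GGoal α → Prop :=
  Relation.ReflTransGen (GStepC P Δ)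

/-- `cr` is the computed rule for the literal `l` generated on the system `(P, Δ)`:
`l → F` if `l` rewrites to (the normal form) `F`, and `l → T(C₁) ∨ … ∨ T(Cₙ)` if `l`
rewrites to (the normal form) `T(C₁) ∨ … ∨ T(Cₙ)`. -/
def IsComputedRule {α : Type} [DecidableEq α] (P : List (PRule α))
    (Δ : Lit α → Option (CRule α)) (l : Lit α) : CRule α → Prop
  | .fail => GStepsC P Δ (initGoal l) GGoal.F
  | .succ Cs => Cs ≠ [] ∧ GStepsC P Δ (initGoal l) (disjTT Cs)

/-- The systems `R⁰_P, R¹_P, R²_P, …`: `R⁰_P` has no computed rules, and `R^{i+1}_P` is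
obtained from `R^i_P` by replacing the rewrite rules of some literals by their computed
rules generated on `R^i_P` (all other literals keep their `R^i_P` rules). -/
inductive ValidSystem {α : Type} [DecidableEq α] (P : List (PRule α)) :
    (Lit α → Option (CRule α)) → Prop
  | base : ValidSystem P (fun _ => none)
  | step (Δ Δ' : Lit α → Option (CRule α)) :
      ValidSystem P Δ →
      (∀ l : Lit α, Δ' l = Δ l ∨ ∃ cr, Δ' l = some cr ∧ IsComputedRule P Δ l cr) →
      ValidSystem P Δ'


section Aux
variable {α : Type}

namespace Lit
@[simp] lemma compl_compl (l : Lit α) : l.compl.compl = l := by cases l <;> rfl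
lemma pos_or_neg (l : Lit α) : l.isPos ∨ l.isNeg := by cases l <;> simp [isPos, isNeg]
lemma isNeg_of_not_isPos {l : Lit α} (h : ¬ l.isPos) : l.isNeg := by
  cases l <;> simp_all [isPos, isNeg]
lemma not_isPos_of_isNeg {l : Lit α} (h : l.isNeg) : ¬ l.isPos := by
  cases l <;> simp_all [isPos, isNeg]
end Lit

lemma mem_bodyLits_pos {r : PRule α} {b : α} : Lit.pos b ∈ bodyLits r ↔ b ∈ r.pos := by
  simp [bodyLits]
lemma mem_bodyLits_neg {r : PRule α} {b : α} : Lit.neg b ∈ bodyLits r ↔ b ∈ r.neg := by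
  simp [bodyLits]

lemma derives_mono {P : List (PRule α)} {S S' : Set α} (hss : S ⊆ S') {a : α}
    (h : Derives P S a) : Derives P S' a := by
  induction h with
  | step r hr hpos hneg ih => exact Derives.step r hr (fun b hb => ih b hb) (fun c hc => hss (hneg c hc))

lemma fpop_anti {P : List (PRule α)} {S S' : Set α} (hss : S ⊆ S') : FPop P S' ⊆ FPop P S :=
  fun _ h hd => h (derives_mono hss hd)

/-- The local closure conditions on an answer set. -/
def PreGoodSet (P : List (PRule α)) (D : Set (Lit α)) : Prop :=
  (∀ a, Lit.pos a ∈ D → Derives P {b | Lit.neg b ∈ D} a) ∧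
  (∀ a, Lit.neg a ∈ D → ∀ r ∈ P, r.head = a →
    (∃ b ∈ r.pos, Lit.neg b ∈ D) ∨ (∃ c ∈ r.neg, Lit.pos c ∈ D))

/-- KEY LEMMA: a consistent, locally closed set of literals is contained in a
partial stable model. -/
lemma key_psm (P : List (PRule α)) (C : Set (Lit α)) (hcons : ConsistentSet C)
    (hgood : PreGoodSet P C) : ∃ M : Set (Lit α), IsPSM P M ∧ C ⊆ M := by
  classical
  set N : Set α := {b | Lit.neg b ∈ C} with hN
  set Pos : Set α := {b | Lit.pos b ∈ C} with hPos
  have hdisj : ∀ a, a ∈ N → a ∈ Pos → False := fun a h1 h2 => hcons a ⟨h2, h1⟩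
  have lem1 : ∀ X : Set α, (∀ c ∈ Pos, c ∉ X) → ∀ a ∈ N, a ∈ FPop P X := by
    intro X hX a haN hder
    induction hder with
    | step r hr hpos hneg ih =>
      rcases hgood.2 _ haN r hr rfl with ⟨b, hb, hbN⟩ | ⟨c, hc, hcP⟩
      · exact ih b hb hbN
      · exact hX c hcP (hneg c hc)
  have lem2 : ∀ X : Set α, N ⊆ X → ∀ a ∈ Pos, a ∉ FPop P X := by
    intro X hNX a ha hFa
    exact hFa (derives_mono hNX (hgood.1 a ha))
  set H : Set α → Set α := fun X => N ∪ FPop P (FPop P X) with hH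
  have Hmono : ∀ X Y : Set α, X ⊆ Y → H X ⊆ H Y := by
    intro X Y hXY
    exact Set.union_subset_union_right N (fpop_anti (fpop_anti hXY))
  have hS : ∀ X : Set α, N ⊆ X → (∀ c ∈ Pos, c ∉ X) →
      (N ⊆ H X ∧ ∀ c ∈ Pos, c ∉ H X) := by
    intro X hNX hPX
    have h1 : N ⊆ FPop P X := fun a ha => lem1 X hPX a ha
    have h2 : ∀ c ∈ Pos, c ∉ FPop P X := lem2 X hNX
    constructor
    · exact fun a ha => Or.inr (lem1 _ h2 a ha)
    · rintro c hc (hcN | hcF)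
      · exact hdisj c hcN hc
      · exact lem2 _ h1 c hc hcF
  set F : Set (Set α) := {X | N ⊆ X ∧ (∀ c ∈ Pos, c ∉ X) ∧ H X ⊆ X} with hF
  have hX0 : {a | a ∉ Pos} ∈ F := by
    refine ⟨fun a ha => hdisj a ha, fun c hc hc' => hc' hc, ?_⟩
    intro x hx hxP
    exact (hS {a | a ∉ Pos} (fun a ha => hdisj a ha) (fun c hc hc' => hc' hc)).2 x hxP hx
  set L : Set α := ⋂₀ F with hL
  have hNL : N ⊆ L := fun a ha X hXF => hXF.1 ha
  have hPL : ∀ c ∈ Pos, c ∉ L := fun c hc hcL => (hcL _ hX0) hc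
  have hHL_L : H L ⊆ L := by
    intro x hx X hXF
    exact hXF.2.2 (Hmono L X (fun y hy => hy X hXF) hx)
  have hLHL : L ⊆ H L := by
    have hmem : H L ∈ F := ⟨(hS L hNL hPL).1, (hS L hNL hPL).2, Hmono _ _ hHL_L⟩
    exact fun x hx => hx _ hmem
  have hNFL : N ⊆ FPop P L := fun a ha => lem1 L hPL a ha
  have hPFL : ∀ c ∈ Pos, c ∉ FPop P L := lem2 L hNL
  have hNF2 : N ⊆ FPop P (FPop P L) := fun a ha => lem1 _ hPFL a ha
  have hfix : FPop P (FPop P L) = L := by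
    apply Set.Subset.antisymm
    · exact fun x hx => hHL_L (Or.inr hx)
    · intro x hx
      rcases hLHL hx with hxN | hxF
      · exact hNF2 hxN
      · exact hxF
  have hLF : L ⊆ FPop P L := by
    have hmem : FPop P L ∈ F := by
      refine ⟨hNFL, hPFL, ?_⟩
      rintro x (hxN | hxF)
      · exact hNFL hxN
      · exact (congrArg (FPop P) hfix) ▸ hxF
    exact fun x hx => hx _ hmem
  refine ⟨modelOf P L, ⟨L, hfix, hLF, rfl⟩, ?_⟩
  intro x hx
  cases x with
  | pos a => exact ⟨a, Or.inr ⟨rfl, derives_mono hNL (hgood.1 a hx)⟩⟩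
  | neg a => exact ⟨a, Or.inl ⟨rfl, hNL hx⟩⟩

end Aux

section Lists
variable {α : Type}

lemma eq_nil_or_concat' (l : List α) : l = [] ∨ ∃ l' a, l = l' ++ [a] := by
  simpa using List.eq_nil_or_concat l

lemma concat_split {c : List α} {b x : α} {xs ys : List α}
    (h : c ++ [b] = xs ++ x :: ys) :
    (ys = [] ∧ xs = c ∧ x = b) ∨ ∃ ys', ys = ys' ++ [b] ∧ c = xs ++ x :: ys' := by
  rcases eq_nil_or_concat' ys with rfl | ⟨ys', y, rfl⟩
  · left
    have h' : c ++ [b] = xs ++ [x] := h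
    obtain ⟨h1, h2⟩ := List.append_inj' h' rfl
    refine ⟨rfl, h1.symm, ?_⟩
    injection h2 with h3 _
    exact h3.symm
  · right
    have h' : c ++ [b] = (xs ++ x :: ys') ++ [y] := by simp [h]
    obtain ⟨h1, h2⟩ := List.append_inj' h' rfl
    injection h2 with h3 _
    exact ⟨ys', by rw [h3], h1⟩

lemma prefix_concat' {c d : List α} {l : α} (h : d <+: c ++ [l]) :
    d <+: c ∨ d = c ++ [l] := by
  obtain ⟨t, ht⟩ := h
  rcases eq_nil_or_concat' t with rfl | ⟨t', y, rfl⟩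
  · right; simpa using ht
  · left
    have h' : d ++ t' ++ [y] = c ++ [l] := by simpa using ht
    obtain ⟨h1, _⟩ := List.append_inj' h' rfl
    exact ⟨t', h1⟩

lemma suffix_getLast? {s c : List α} (h : s <:+ c) (hne : s ≠ []) :
    s.getLast? = c.getLast? := by
  obtain ⟨t, rfl⟩ := h
  exact (List.getLast?_append_of_ne_nil t hne).symm

end Lists

section Chains
variable {α : Type}

/-- All nonempty prefixes of the chain are loop-free. -/
def ChainOK (c : List (Lit α)) : Prop := ∀ d, d <+: c → d ≠ [] → ¬ LoopChain d

lemma chainOK_nil : ChainOK ([] : List (Lit α)) := by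
  intro d hd hne
  rcases List.prefix_nil.mp hd with rfl
  exact absurd rfl hne

lemma chainOK_concat {c : List (Lit α)} {l : Lit α} (h : ChainOK c)
    (hl : ¬ LoopChain (c ++ [l])) : ChainOK (c ++ [l]) := by
  intro d hd hne
  rcases prefix_concat' hd with hd' | rfl
  · exact h d hd' hne
  · exact hl

lemma pair_fail {c : List (Lit α)} {xs ys : List (Lit α)} {x : Lit α}
    (hsplit : c = xs ++ x :: ys) (hmem : x.compl ∈ ys) :
    ∃ d, d <+: c ∧ d ≠ [] ∧ FailLoopChain d := by
  obtain ⟨us, vs, rfl⟩ := List.append_of_mem hmem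
  refine ⟨xs ++ x :: (us ++ [x.compl]), ⟨vs, by simp [hsplit]⟩, by simp, ?_⟩
  refine ⟨x :: (us ++ [x.compl]), ⟨xs, by simp⟩, Or.inr ?_⟩
  constructor
  · simp
  · have hg : (x :: (us ++ [x.compl])).getLast? = some x.compl := by
      rw [show x :: (us ++ [x.compl]) = (x :: us) ++ [x.compl] by simp, List.getLast?_concat]
    rw [hg]
    simp

lemma chainOK_consistent {c : List (Lit α)} (h : ChainOK c) :
    ConsistentSet {x | x ∈ c} := by
  intro a ⟨hp, hn⟩
  simp only [Set.mem_setOf_eq] at hp hn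
  obtain ⟨xs, ys, rfl⟩ := List.append_of_mem hp
  have hn' : Lit.neg a ∈ xs ∨ Lit.neg a ∈ Lit.pos a :: ys := by
    simpa using hn
  have hfail : ∃ d, d <+: xs ++ Lit.pos a :: ys ∧ d ≠ [] ∧ FailLoopChain d := by
    rcases hn' with hx | hy
    · obtain ⟨us, vs, rfl⟩ := List.append_of_mem hx
      refine pair_fail (x := Lit.neg a) (xs := us) (ys := vs ++ Lit.pos a :: ys) (by simp) ?_
      simp [Lit.compl]
    · have hy' : Lit.neg a ∈ ys := by
        rcases List.mem_cons.mp hy with h' | h'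
        · exact absurd h' (by simp)
        · exact h'
      exact pair_fail (x := Lit.pos a) rfl (by simpa [Lit.compl] using hy')
  obtain ⟨d, hd, hne, hf⟩ := hfail
  exact h d hd hne (Or.inl hf)

lemma succ_mem {c : List (Lit α)} {l : Lit α} (h : SuccLoopChain (c ++ [l])) : l ∈ c := by
  obtain ⟨seg, hsuf, hloop⟩ := h
  have hlen : 2 ≤ seg.length ∧ seg.head? = seg.getLast? := by
    rcases hloop with ⟨h1, h2, _⟩ | ⟨h1, h2, _, _⟩ <;> exact ⟨h1, h2⟩
  have hne : seg ≠ [] := by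
    intro hh; rw [hh] at hlen; simp at hlen
  have hlast : seg.getLast? = some l := by
    rw [suffix_getLast? hsuf hne, List.getLast?_concat]
  obtain ⟨t, ht⟩ := hsuf
  cases seg with
  | nil => exact absurd rfl hne
  | cons s0 tail =>
    have hs0 : s0 = l := by
      have := hlen.2
      rw [hlast] at this
      simpa using this
    have htail : tail ≠ [] := by
      intro hh; rw [hh] at hlen; simp at hlen
    rcases eq_nil_or_concat' tail with rfl | ⟨mid, y, rfl⟩
    · exact absurd rfl htail
    · have hy : y = l := by
        have h1 : (s0 :: (mid ++ [y])).getLast? = some y := by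
          rw [show s0 :: (mid ++ [y]) = (s0 :: mid) ++ [y] by simp, List.getLast?_concat]
        rw [h1] at hlast
        injection hlast
      have h' : (t ++ s0 :: mid) ++ [y] = c ++ [l] := by simpa using ht
      rw [hy] at h'
      obtain ⟨h1, _⟩ := List.append_inj' h' rfl
      rw [← h1, ← hs0]
      exact List.mem_append.mpr (Or.inr List.mem_cons_self)

end Chains

set_option linter.unusedSectionVars false
set_option linter.unusedVariables false
section JDef
variable {α : Type} [DecidableEq α]

lemma mem_of_getLast?_eq {l : List α} {a : α} (h : l.getLast? = some a) : a ∈ l :=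
  List.mem_of_mem_getLast? (by rw [h]; rfl)

/-- Semantic justification trees for answers of a literal with ancestor chain `anc`. -/
inductive J (P : List (PRule α)) : Lit α → List (Lit α) → Set (Lit α) → Prop where
  | expandPos (a : α) (anc : List (Lit α)) (r : PRule α) (hr : r ∈ P) (hh : r.head = a)
      (D : Set (Lit α)) (Dof : ℕ → Set (Lit α))
      (hb : ∀ i (h : i < (bodyLits r).length),
        J P ((bodyLits r).get ⟨i, h⟩) (anc ++ [Lit.pos a]) (Dof i))
      (hsub : ∀ i, i < (bodyLits r).length → Dof i ⊆ D)
      (hchain : ∀ x ∈ anc ++ [Lit.pos a], x ∈ D)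
      (hcov : ∀ x ∈ D, (x ∈ anc ++ [Lit.pos a]) ∨ ∃ i, ∃ h : i < (bodyLits r).length, x ∈ Dof i) :
      J P (Lit.pos a) anc D
  | expandNeg (a : α) (anc : List (Lit α)) (D : Set (Lit α))
      (bof : ∀ i, i < (rulesFor P a).length → Lit α) (Dof : ℕ → Set (Lit α))
      (hbm : ∀ i (h : i < (rulesFor P a).length), bof i h ∈ bodyLits ((rulesFor P a).get ⟨i, h⟩))
      (hbJ : ∀ i (h : i < (rulesFor P a).length), J P (bof i h).compl (anc ++ [Lit.neg a]) (Dof i))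
      (hsub : ∀ i, i < (rulesFor P a).length → Dof i ⊆ D)
      (hchain : ∀ x ∈ anc ++ [Lit.neg a], x ∈ D)
      (hcov : ∀ x ∈ D, (x ∈ anc ++ [Lit.neg a]) ∨ ∃ i, ∃ h : i < (rulesFor P a).length, x ∈ Dof i) :
      J P (Lit.neg a) anc D
  | loop (l : Lit α) (anc : List (Lit α)) (h : SuccLoopChain (anc ++ [l])) :
      J P l anc {x | x ∈ anc ++ [l]}
  | ext (l : Lit α) (anc : List (Lit α)) (D₀ : Set (Lit α)) (h1 : l ∈ D₀)
      (hg : PreGoodSet P D₀) : J P l anc ({x | x ∈ anc ++ [l]} ∪ D₀)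

lemma J_mem {P : List (PRule α)} {l : Lit α} {anc : List (Lit α)} {D : Set (Lit α)}
    (hJ : J P l anc D) : ∀ x ∈ anc ++ [l], x ∈ D := by
  cases hJ with
  | expandPos a anc r hr hh D Dof hb hsub hchain hcov => exact hchain
  | expandNeg a anc D bof Dof hbm hbJ hsub hchain hcov => exact hchain
  | loop l anc h => exact fun x hx => hx
  | ext l anc D₀ h1 hg => exact fun x hx => Or.inl hx

lemma J_self_mem {P : List (PRule α)} {l : Lit α} {anc : List (Lit α)} {D : Set (Lit α)}
    (hJ : J P l anc D) : l ∈ D :=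
  J_mem hJ l (List.mem_append.mpr (Or.inr List.mem_cons_self))

/-- Outright derivability hypotheses for positive chain members with a negative below. -/
def HPo (P : List (PRule α)) (ch : List (Lit α)) (C : Set (Lit α)) : Prop :=
  ∀ xs p ys, ch = xs ++ Lit.pos p :: ys → (∃ y ∈ ys, y.isNeg) →
    Derives P {b | Lit.neg b ∈ C} p

/-- Conditional derivability for positive chain members in the trailing positive run. -/
def HPr (P : List (PRule α)) (ch : List (Lit α)) (C : Set (Lit α)) : Prop :=
  ∀ xs p ys, ch = xs ++ Lit.pos p :: ys → (∀ y ∈ ys, y.isPos) →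
    ∀ q, ch.getLast? = some (Lit.pos q) → Derives P {b | Lit.neg b ∈ C} q →
      Derives P {b | Lit.neg b ∈ C} p

/-- Blocking hypotheses for negative chain members. -/
def HNeg (P : List (PRule α)) (anc : List (Lit α)) (C : Set (Lit α)) : Prop :=
  ∀ a, Lit.neg a ∈ anc → ∀ r ∈ P, r.head = a →
    (∃ b ∈ r.pos, Lit.neg b ∈ C) ∨ (∃ c ∈ r.neg, Lit.pos c ∈ C)

def InRun (p : α) (ch : List (Lit α)) : Prop :=
  ∃ xs ys, ch = xs ++ Lit.pos p :: ys ∧ ∀ y ∈ ys, y.isPos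

lemma split_allpos_neglast {ch : List (Lit α)} {a : α} {xs : List (Lit α)} {p : α}
    {ys : List (Lit α)} (hlast : ch.getLast? = some (Lit.neg a))
    (hsplit : ch = xs ++ Lit.pos p :: ys) (hall : ∀ y ∈ ys, y.isPos) : False := by
  rcases eq_nil_or_concat' ys with rfl | ⟨ys', y, rfl⟩
  · rw [hsplit, show xs ++ [Lit.pos p] = xs ++ [Lit.pos p] from rfl, List.getLast?_concat] at hlast
    exact absurd (Option.some.inj hlast) (by simp)
  · rw [hsplit, show xs ++ Lit.pos p :: (ys' ++ [y]) = (xs ++ Lit.pos p :: ys') ++ [y] by simp,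
      List.getLast?_concat] at hlast
    have := hall y (by simp)
    rw [Option.some.inj hlast] at this
    exact this

lemma hpo_extend {P : List (PRule α)} {ch : List (Lit α)} {C : Set (Lit α)} {x : Lit α}
    (hpo : HPo P ch C)
    (hrun : ∀ xs p ys, ch = xs ++ Lit.pos p :: ys → (∀ y ∈ ys, y.isPos) →
      Derives P {b | Lit.neg b ∈ C} p) :
    HPo P (ch ++ [x]) C := by
  intro xs p ys heq hex
  rcases concat_split heq with ⟨rfl, rfl, hx3⟩ | ⟨ys', rfl, hch⟩
  · obtain ⟨y, hy, _⟩ := hex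
    exact absurd hy List.not_mem_nil
  · by_cases hall : ∀ y ∈ ys', y.isPos
    · exact hrun xs p ys' hch hall
    · push_neg at hall
      obtain ⟨y, hy, hyp⟩ := hall
      exact hpo xs p ys' hch ⟨y, hy, Lit.isNeg_of_not_isPos hyp⟩

lemma hpo_extend_pos {P : List (PRule α)} {ch : List (Lit α)} {C : Set (Lit α)} {b : α}
    (hpo : HPo P ch C) : HPo P (ch ++ [Lit.pos b]) C := by
  intro xs p ys heq hex
  rcases concat_split heq with ⟨rfl, rfl, heq2⟩ | ⟨ys', rfl, hch⟩
  · obtain ⟨y, hy, _⟩ := hex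
    exact absurd hy List.not_mem_nil
  · obtain ⟨y, hy, hyn⟩ := hex
    rcases List.mem_append.mp hy with hy' | hy'
    · exact hpo xs p ys' hch ⟨y, hy', hyn⟩
    · rcases List.mem_singleton.mp hy' with rfl
      exact absurd hyn (by simp [Lit.isNeg])

lemma hpr_concat_neg {P : List (PRule α)} {ch : List (Lit α)} {C : Set (Lit α)} {x : Lit α}
    (hx : x.isNeg) : HPr P (ch ++ [x]) C := by
  intro xs p ys heq hall q hq hder
  rcases concat_split heq with ⟨rfl, rfl, hx3⟩ | ⟨ys', rfl, hch⟩
  · rw [← hx3] at hx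
    exact absurd hx (by simp [Lit.isNeg])
  · have := hall x (by simp)
    exact absurd this (Lit.not_isPos_of_isNeg hx)

lemma hpr_extend_pos {P : List (PRule α)} {ch : List (Lit α)} {C : Set (Lit α)} {b : α}
    {q0 : α} (hpr : HPr P ch C) (hlast : ch.getLast? = some (Lit.pos q0))
    (hq0 : Derives P {b | Lit.neg b ∈ C} q0) : HPr P (ch ++ [Lit.pos b]) C := by
  intro xs p ys heq hall q hq hder
  have hqb : q = b := by
    rw [List.getLast?_concat] at hq
    exact (Lit.pos.inj (Option.some.inj hq)).symm
  rcases concat_split heq with ⟨rfl, rfl, heq2⟩ | ⟨ys', rfl, hch⟩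
  · have : p = b := Lit.pos.inj heq2
    subst this; subst hqb
    exact hder
  · refine hpr xs p ys' hch (fun y hy => hall y (by simp [hy])) q0 hlast hq0

lemma hpr_neglast {P : List (PRule α)} {ch : List (Lit α)} {C : Set (Lit α)} {a : α}
    {x : Lit α} (hlast : ch.getLast? = some (Lit.neg a)) : HPr P (ch ++ [x]) C := by
  intro xs p ys heq hall q hq hder
  rcases concat_split heq with ⟨rfl, rfl, hx3⟩ | ⟨ys', rfl, hch⟩
  · rw [← hx3, List.getLast?_concat] at hq
    have hq' : q = p := (Lit.pos.inj (Option.some.inj hq)).symm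
    subst hq'; exact hder
  · exact absurd (split_allpos_neglast hlast hch (fun y hy => hall y (by simp [hy]))) id

/-- Structure of a succeeding/even loop segment on a chain ending in `l`. -/
lemma loop_seg_structure {c : List (Lit α)} {l : Lit α} {seg : List (Lit α)}
    (hsuf : seg <:+ c ++ [l]) (hlen : 2 ≤ seg.length) (hhl : seg.head? = seg.getLast?) :
    ∃ t tail, seg = l :: tail ∧ c ++ [l] = t ++ l :: tail ∧ tail ≠ [] := by
  have hne : seg ≠ [] := by intro hh; rw [hh] at hlen; simp at hlen
  have hlast : seg.getLast? = some l := by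
    rw [suffix_getLast? hsuf hne, List.getLast?_concat]
  obtain ⟨t, ht⟩ := hsuf
  cases seg with
  | nil => exact absurd rfl hne
  | cons s0 tail =>
    have hs0 : s0 = l := by
      have h' := hhl
      rw [hlast] at h'
      simpa using h'
    subst hs0
    refine ⟨t, tail, rfl, ht.symm, ?_⟩
    intro hh; rw [hh] at hlen; simp at hlen

/-- From a succeeding loop, an even-loop with positive endpoint yields an HPo witness. -/
lemma succ_loop_pos_derives {P : List (PRule α)} {anc : List (Lit α)} {a : α}
    {C : Set (Lit α)} (hsl : SuccLoopChain (anc ++ [Lit.pos a]))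
    (hpo : HPo P (anc ++ [Lit.pos a]) C) : Derives P {b | Lit.neg b ∈ C} a := by
  classical
  obtain ⟨seg, hsuf, hloop⟩ := hsl
  have key : 2 ≤ seg.length ∧ seg.head? = seg.getLast? := by
    rcases hloop with ⟨h1, h2, _⟩ | ⟨h1, h2, _, _⟩ <;> exact ⟨h1, h2⟩
  obtain ⟨t, tail, hseg, hch, htail⟩ := loop_seg_structure hsuf key.1 key.2
  have hyneg : ∃ y ∈ seg, y.isNeg := by
    rcases hloop with ⟨_, _, hall⟩ | ⟨_, heq2, hnp, _⟩
    · exact absurd (hall (Lit.pos a) (by rw [hseg]; exact List.mem_cons_self)) (by simp [Lit.isNeg])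
    · by_contra hc
      push_neg at hc
      exact hnp ⟨key.1, heq2, fun x hx => by
        rcases Lit.pos_or_neg x with h | h
        · exact h
        · exact absurd h (fun hh => hc x hx (Lit.isNeg_of_not_isPos (fun hp => (Lit.not_isPos_of_isNeg hh) hp)))⟩
  obtain ⟨y, hy, hyn⟩ := hyneg
  have hytail : y ∈ tail := by
    rw [hseg] at hy
    rcases List.mem_cons.mp hy with rfl | h'
    · exact absurd hyn (by simp [Lit.isNeg])
    · exact h'
  exact hpo t a tail hch ⟨y, hytail, hyn⟩

end JDef

section JSelf
variable {α : Type} [DecidableEq α]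

lemma J_self {P : List (PRule α)} {l : Lit α} {anc : List (Lit α)} {D : Set (Lit α)}
    (hJ : J P l anc D) :
    ∀ C : Set (Lit α), D ⊆ C → HPo P (anc ++ [l]) C →
      ∀ a, l = Lit.pos a → Derives P {b | Lit.neg b ∈ C} a := by
  induction hJ with
  | expandPos a anc r hr hh D Dof hb hsub hchain hcov ih =>
    intro C hDC hpo a' heq
    injection heq with haa
    subst haa
    have hstep : Derives P {b | Lit.neg b ∈ C} r.head := by
      refine Derives.step r hr ?_ ?_
      · intro b hbmem
        obtain ⟨⟨i, hi⟩, hgi⟩ := List.get_of_mem (mem_bodyLits_pos.mpr hbmem)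
        have hpo' : HPo P ((anc ++ [Lit.pos a]) ++ [Lit.pos b]) C := hpo_extend_pos hpo
        refine ih i hi C (fun x hx => hDC (hsub i hi hx)) ?_ b hgi
        rw [hgi]
        exact hpo'
      · intro c hcmem
        obtain ⟨⟨i, hi⟩, hgi⟩ := List.get_of_mem (mem_bodyLits_neg.mpr hcmem)
        have := J_self_mem (hb i hi)
        rw [hgi] at this
        exact hDC (hsub i hi this)
    rw [hh] at hstep
    exact hstep
  | expandNeg a anc D bof Dof hbm hbJ hsub hchain hcov ih =>
    intro C _ _ a' heq
    exact absurd heq (by simp)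
  | loop l anc hsl =>
    intro C hDC hpo a heq
    subst heq
    exact succ_loop_pos_derives hsl hpo
  | ext l anc D₀ h1 hg =>
    intro C hDC hpo a heq
    subst heq
    refine derives_mono ?_ (hg.1 a h1)
    intro b hb
    exact hDC (Or.inr hb)

end JSelf

section JMain
variable {α : Type} [DecidableEq α]

lemma chain_pos_analysis {P : List (PRule α)} {C : Set (Lit α)} {p : α} {ch : List (Lit α)}
    (hmem : Lit.pos p ∈ ch) (hpo : HPo P ch C) :
    Derives P {b | Lit.neg b ∈ C} p ∨ InRun p ch := by
  classical
  obtain ⟨xs, ys, rfl⟩ := List.append_of_mem hmem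
  by_cases hall : ∀ y ∈ ys, y.isPos
  · exact Or.inr ⟨xs, ys, rfl, hall⟩
  · push_neg at hall
    obtain ⟨y, hy, hyp⟩ := hall
    exact Or.inl (hpo xs p ys rfl ⟨y, hy, Lit.isNeg_of_not_isPos hyp⟩)

lemma inRun_concat {p : α} {ch : List (Lit α)} {x : Lit α} (h : InRun p (ch ++ [x])) :
    x = Lit.pos p ∨ InRun p ch := by
  obtain ⟨xs, ys, heq, hall⟩ := h
  rcases concat_split heq with ⟨rfl, rfl, hx3⟩ | ⟨ys', rfl, hch⟩
  · exact Or.inl hx3.symm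
  · exact Or.inr ⟨xs, ys', hch, fun y hy => hall y (by simp [hy])⟩

lemma hneg_concat_pos {P : List (PRule α)} {anc : List (Lit α)} {C : Set (Lit α)} {a : α}
    (hn : HNeg P anc C) : HNeg P (anc ++ [Lit.pos a]) C := by
  intro a' ha'
  rcases List.mem_append.mp ha' with h | h
  · exact hn a' h
  · exact absurd (List.mem_singleton.mp h) (by simp)

lemma hneg_concat_neg {P : List (PRule α)} {anc : List (Lit α)} {C : Set (Lit α)} {a : α}
    (hn : HNeg P anc C)
    (ha : ∀ r ∈ P, r.head = a → (∃ b ∈ r.pos, Lit.neg b ∈ C) ∨ (∃ c ∈ r.neg, Lit.pos c ∈ C)) :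
    HNeg P (anc ++ [Lit.neg a]) C := by
  intro a' ha'
  rcases List.mem_append.mp ha' with h | h
  · exact hn a' h
  · have : a' = a := by
      have := List.mem_singleton.mp h
      exact Lit.neg.inj this
    subst this
    exact ha

lemma J_main {P : List (PRule α)} {l : Lit α} {anc : List (Lit α)} {D : Set (Lit α)}
    (hJ : J P l anc D) :
    ∀ C : Set (Lit α), D ⊆ C → HNeg P anc C → HPo P (anc ++ [l]) C → HPr P (anc ++ [l]) C →
      (∀ x, Lit.pos x ∈ D → Derives P {b | Lit.neg b ∈ C} x ∨ InRun x (anc ++ [l])) ∧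
      (∀ a, Lit.neg a ∈ D → ∀ r ∈ P, r.head = a →
        (∃ b ∈ r.pos, Lit.neg b ∈ C) ∨ (∃ c ∈ r.neg, Lit.pos c ∈ C)) := by
  induction hJ with
  | expandPos a anc r hr hh D Dof hb hsub hchain hcov ih =>
    intro C hDC hn hpo hpr
    have hJall : J P (Lit.pos a) anc D := J.expandPos a anc r hr hh D Dof hb hsub hchain hcov
    have dA : Derives P {b | Lit.neg b ∈ C} a := J_self hJall C hDC hpo a rfl
    have hlast : (anc ++ [Lit.pos a]).getLast? = some (Lit.pos a) := List.getLast?_concat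
    have hrun : ∀ xs p ys, anc ++ [Lit.pos a] = xs ++ Lit.pos p :: ys →
        (∀ y ∈ ys, y.isPos) → Derives P {b | Lit.neg b ∈ C} p :=
      fun xs p ys heq hall => hpr xs p ys heq hall a hlast dA
    have hni : HNeg P (anc ++ [Lit.pos a]) C := hneg_concat_pos hn
    have trans : ∀ i (hi : i < (bodyLits r).length),
        (∀ x, Lit.pos x ∈ Dof i → Derives P {b | Lit.neg b ∈ C} x ∨
          InRun x ((anc ++ [Lit.pos a]) ++ [(bodyLits r).get ⟨i, hi⟩])) ∧
        (∀ a', Lit.neg a' ∈ Dof i → ∀ r' ∈ P, r'.head = a' →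
          (∃ b ∈ r'.pos, Lit.neg b ∈ C) ∨ (∃ c ∈ r'.neg, Lit.pos c ∈ C)) := by
      intro i hi
      have hpoi : HPo P ((anc ++ [Lit.pos a]) ++ [(bodyLits r).get ⟨i, hi⟩]) C :=
        hpo_extend hpo hrun
      have hpri : HPr P ((anc ++ [Lit.pos a]) ++ [(bodyLits r).get ⟨i, hi⟩]) C := by
        cases hbl : (bodyLits r).get ⟨i, hi⟩ with
        | pos b => exact hpr_extend_pos hpr hlast dA
        | neg b => exact hpr_concat_neg (by simp [Lit.isNeg])
      exact ih i hi C (fun x hx => hDC (hsub i hi hx)) hni hpoi hpri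
    constructor
    · intro x hx
      rcases hcov (Lit.pos x) hx with hxc | ⟨i, hi, hxD⟩
      · exact chain_pos_analysis hxc hpo
      · rcases (trans i hi).1 x hxD with hder | hrun'
        · exact Or.inl hder
        · rcases inRun_concat hrun' with hbx | hrun''
          · refine Or.inl (J_self (hb i hi) C (fun y hy => hDC (hsub i hi hy)) ?_ x hbx)
            rw [hbx]
            exact hpo_extend hpo hrun
          · exact Or.inr hrun''
    · intro a' ha'
      rcases hcov _ ha' with hxc | ⟨i, hi, hxD⟩
      · rcases List.mem_append.mp hxc with h | h
        · exact hn a' h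
        · exact absurd (List.mem_singleton.mp h) (by simp)
      · exact (trans i hi).2 a' hxD
  | expandNeg a anc D bof Dof hbm hbJ hsub hchain hcov ih =>
    intro C hDC hn hpo hpr
    have hlast : (anc ++ [Lit.neg a]).getLast? = some (Lit.neg a) := List.getLast?_concat
    have h2a : ∀ r ∈ P, r.head = a →
        (∃ b ∈ r.pos, Lit.neg b ∈ C) ∨ (∃ c ∈ r.neg, Lit.pos c ∈ C) := by
      intro r hrP hhr
      have hrf : r ∈ rulesFor P a := List.mem_filter.mpr ⟨hrP, by simp [hhr]⟩
      obtain ⟨⟨i, hi⟩, hgi⟩ := List.get_of_mem hrf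
      have hbmem := hbm i hi
      rw [hgi] at hbmem
      have hcmem : (bof i hi).compl ∈ C := hDC (hsub i hi (J_self_mem (hbJ i hi)))
      cases hbl : bof i hi with
      | pos b =>
        rw [hbl] at hbmem hcmem
        exact Or.inl ⟨b, mem_bodyLits_pos.mp hbmem, hcmem⟩
      | neg c =>
        rw [hbl] at hbmem hcmem
        exact Or.inr ⟨c, mem_bodyLits_neg.mp hbmem, hcmem⟩
    have hni : HNeg P (anc ++ [Lit.neg a]) C := hneg_concat_neg hn h2a
    have hrun : ∀ xs p ys, anc ++ [Lit.neg a] = xs ++ Lit.pos p :: ys →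
        (∀ y ∈ ys, y.isPos) → Derives P {b | Lit.neg b ∈ C} p :=
      fun xs p ys heq hall => absurd (split_allpos_neglast hlast heq hall) id
    have trans : ∀ i (hi : i < (rulesFor P a).length),
        (∀ x, Lit.pos x ∈ Dof i → Derives P {b | Lit.neg b ∈ C} x ∨
          InRun x ((anc ++ [Lit.neg a]) ++ [(bof i hi).compl])) ∧
        (∀ a', Lit.neg a' ∈ Dof i → ∀ r' ∈ P, r'.head = a' →
          (∃ b ∈ r'.pos, Lit.neg b ∈ C) ∨ (∃ c ∈ r'.neg, Lit.pos c ∈ C)) := by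
      intro i hi
      exact ih i hi C (fun x hx => hDC (hsub i hi hx)) hni (hpo_extend hpo hrun)
        (hpr_neglast hlast)
    constructor
    · intro x hx
      rcases hcov (Lit.pos x) hx with hxc | ⟨i, hi, hxD⟩
      · exact chain_pos_analysis hxc hpo
      · rcases (trans i hi).1 x hxD with hder | hrun'
        · exact Or.inl hder
        · rcases inRun_concat hrun' with hbx | hrun''
          · refine Or.inl (J_self (hbJ i hi) C (fun y hy => hDC (hsub i hi hy)) ?_ x hbx)
            rw [hbx]
            exact hpo_extend hpo hrun
          · exact Or.inr hrun''
    · intro a' ha'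
      rcases hcov _ ha' with hxc | ⟨i, hi, hxD⟩
      · rcases List.mem_append.mp hxc with h | h
        · exact hn a' h
        · have : a' = a := Lit.neg.inj (List.mem_singleton.mp h)
          subst this
          exact h2a
      · exact (trans i hi).2 a' hxD
  | loop l anc hsl =>
    intro C hDC hn hpo hpr
    constructor
    · intro x hx
      exact chain_pos_analysis hx hpo
    · intro a' ha'
      rcases List.mem_append.mp ha' with h | h
      · exact hn a' h
      · have hl : Lit.neg a' = l := List.mem_singleton.mp h
        rw [← hl] at hsl
        exact hn a' (succ_mem hsl)
  | ext l anc D₀ h1 hg =>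
    intro C hDC hn hpo hpr
    have hND : {b | Lit.neg b ∈ D₀} ⊆ {b | Lit.neg b ∈ C} :=
      fun b hb => hDC (Or.inr hb)
    constructor
    · intro x hx
      rcases hx with hxc | hxD
      · exact chain_pos_analysis hxc hpo
      · exact Or.inl (derives_mono hND (hg.1 x hxD))
    · intro a' ha' r hrP hhr
      have key : Lit.neg a' ∈ D₀ → _ := fun hmem => hg.2 a' hmem r hrP hhr
      rcases ha' with hxc | hxD
      · rcases List.mem_append.mp hxc with h | h
        · exact hn a' h r hrP hhr
        · have hl : Lit.neg a' = l := List.mem_singleton.mp h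
          rcases key (hl ▸ h1) with ⟨b, hb, hbD⟩ | ⟨c, hc, hcD⟩
          · exact Or.inl ⟨b, hb, hDC (Or.inr hbD)⟩
          · exact Or.inr ⟨c, hc, hDC (Or.inr hcD)⟩
      · rcases key hxD with ⟨b, hb, hbD⟩ | ⟨c, hc, hcD⟩
        · exact Or.inl ⟨b, hb, hDC (Or.inr hbD)⟩
        · exact Or.inr ⟨c, hc, hDC (Or.inr hcD)⟩

end JMain

section Goals
variable {α : Type} [DecidableEq α]

/-- The semantically justified answers of a goal. -/
def GoalAns (P : List (PRule α)) : GGoal α → Set (Set (Lit α))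
  | .F => ∅
  | .T D => {D}
  | .lit l anc => {D | J P l anc D}
  | .and g h => {D | ∃ D₁ ∈ GoalAns P g, ∃ D₂ ∈ GoalAns P h, D = D₁ ∪ D₂}
  | .or g h => GoalAns P g ∪ GoalAns P h

lemma mem_disjList {P : List (PRule α)} {L : List (GGoal α)} {D : Set (Lit α)} :
    D ∈ GoalAns P (disjList L) ↔ ∃ g ∈ L, D ∈ GoalAns P g := by
  induction L with
  | nil => simp [disjList, GoalAns]
  | cons g gs ih =>
    cases gs with
    | nil => simp [disjList]
    | cons g2 t =>
      constructor
      · rintro (h | h)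
        · exact ⟨g, by simp, h⟩
        · obtain ⟨g', hg', hD⟩ := ih.mp h
          exact ⟨g', by simp [hg'], hD⟩
      · rintro ⟨g', hg', hD⟩
        rcases List.mem_cons.mp hg' with rfl | hg''
        · exact Or.inl hD
        · exact Or.inr (ih.mpr ⟨g', hg'', hD⟩)

lemma mem_disjTT {P : List (PRule α)} {Cs : List (Set (Lit α))} {D : Set (Lit α)} :
    D ∈ GoalAns P (disjTT Cs) ↔ D ∈ Cs := by
  rw [disjTT, mem_disjList]
  constructor
  · rintro ⟨g, hg, hD⟩
    obtain ⟨C, hC, rfl⟩ := List.mem_map.mp hg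
    rw [show GoalAns P (GGoal.T C) = {C} from rfl] at hD
    rwa [Set.mem_singleton_iff.mp hD]
  · intro hD
    exact ⟨GGoal.T D, List.mem_map.mpr ⟨D, hD, rfl⟩, rfl⟩

lemma mem_conjList {P : List (PRule α)} {anc : List (Lit α)} {L : List (GGoal α)}
    {D : Set (Lit α)} (hne : L ≠ []) (hD : D ∈ GoalAns P (conjList anc L)) :
    ∃ Dof : ℕ → Set (Lit α), (∀ i (h : i < L.length), Dof i ∈ GoalAns P (L.get ⟨i, h⟩)) ∧
      (∀ i, i < L.length → Dof i ⊆ D) ∧ (∀ x ∈ D, ∃ i, ∃ h : i < L.length, x ∈ Dof i) := by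
  induction L generalizing D with
  | nil => exact absurd rfl hne
  | cons g gs ih =>
    cases gs with
    | nil =>
      refine ⟨fun _ => D, ?_, ?_, ?_⟩
      · intro i h
        cases i with
        | zero => exact hD
        | succ i => exact absurd h (by simp)
      · intro i h
        exact subset_rfl
      · intro x hx
        exact ⟨0, by simp, hx⟩
    | cons g2 t =>
      obtain ⟨D₁, hD₁, D₂, hD₂, rfl⟩ := hD
      obtain ⟨Dof', h1, h2, h3⟩ := ih (by simp) hD₂
      refine ⟨fun i => Nat.rec D₁ (fun i _ => Dof' i) i, ?_, ?_, ?_⟩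
      · intro i h
        cases i with
        | zero => exact hD₁
        | succ i => exact h1 i (by simpa using h)
      · intro i h
        cases i with
        | zero => exact Set.subset_union_left
        | succ i => exact (h2 i (by simpa using h)).trans Set.subset_union_right
      · rintro x (hx | hx)
        · exact ⟨0, by simp, hx⟩
        · obtain ⟨i, hi, hxi⟩ := h3 x hx
          exact ⟨i + 1, by simpa using hi, hxi⟩

lemma posExp_sound {P : List (PRule α)} {a : α} {anc : List (Lit α)} {D : Set (Lit α)}
    (hD : D ∈ GoalAns P (posExp P (anc ++ [Lit.pos a]) a)) : J P (Lit.pos a) anc D := by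
  rw [posExp, mem_disjList] at hD
  obtain ⟨g', hg', hDg⟩ := hD
  obtain ⟨r, hrf, rfl⟩ := List.mem_map.mp hg'
  have hrP : r ∈ P := (List.mem_filter.mp hrf).1
  have hrh : r.head = a := by
    have := (List.mem_filter.mp hrf).2
    exact of_decide_eq_true this
  by_cases hbod : bodyLits r = []
  · rw [hbod] at hDg
    rw [show ((([] : List (Lit α))).map (fun l => GGoal.lit l (anc ++ [Lit.pos a]))) = [] from rfl] at hDg
    rw [show conjList (anc ++ [Lit.pos a]) ([] : List (GGoal α)) =
      GGoal.T {x | x ∈ anc ++ [Lit.pos a]} from rfl] at hDg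
    rw [show GoalAns P (GGoal.T {x | x ∈ anc ++ [Lit.pos a]}) = {{x | x ∈ anc ++ [Lit.pos a]}} from rfl] at hDg
    rw [Set.mem_singleton_iff.mp hDg]
    refine J.expandPos a anc r hrP hrh _ (fun _ => ∅) ?_ ?_ ?_ ?_
    · intro i h
      rw [hbod] at h
      exact absurd h (by simp)
    · intro i h
      rw [hbod] at h
      exact absurd h (by simp)
    · exact fun x hx => hx
    · exact fun x hx => Or.inl hx
  · have hne : (bodyLits r).map (fun l => GGoal.lit l (anc ++ [Lit.pos a])) ≠ [] := by
      simpa using hbod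
    obtain ⟨Dof, h1, h2, h3⟩ := mem_conjList hne hDg
    have hlen : ((bodyLits r).map (fun l => GGoal.lit l (anc ++ [Lit.pos a]))).length
        = (bodyLits r).length := by simp
    have hb : ∀ i (h : i < (bodyLits r).length),
        J P ((bodyLits r).get ⟨i, h⟩) (anc ++ [Lit.pos a]) (Dof i) := by
      intro i h
      have := h1 i (by simpa using h)
      rwa [List.get_eq_getElem, List.getElem_map] at this
    refine J.expandPos a anc r hrP hrh D Dof hb ?_ ?_ ?_
    · intro i h
      exact h2 i (by simpa using h)
    · intro x hx
      have h0 : 0 < (bodyLits r).length := by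
        cases hbl : bodyLits r with
        | nil => exact absurd hbl hbod
        | cons _ _ => simp [hbl]
      exact h2 0 (by simpa using h0) (J_mem (hb 0 h0) x (List.mem_append.mpr (Or.inl hx)))
    · intro x hx
      obtain ⟨i, hi, hxi⟩ := h3 x hx
      exact Or.inr ⟨i, by simpa using hi, hxi⟩

lemma negExp_sound {P : List (PRule α)} {a : α} {anc : List (Lit α)} {D : Set (Lit α)}
    (hD : D ∈ GoalAns P (negExp P (anc ++ [Lit.neg a]) a)) : J P (Lit.neg a) anc D := by
  classical
  rw [negExp] at hD
  by_cases hrul : rulesFor P a = []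
  · rw [hrul] at hD
    rw [show (([] : List (PRule α)).map (fun r => disjList ((bodyLits r).map
      (fun l => GGoal.lit l.compl (anc ++ [Lit.neg a]))))) = [] from rfl] at hD
    rw [show conjList (anc ++ [Lit.neg a]) ([] : List (GGoal α)) =
      GGoal.T {x | x ∈ anc ++ [Lit.neg a]} from rfl] at hD
    rw [Set.mem_singleton_iff.mp hD]
    refine J.expandNeg a anc _ (fun i h => absurd h (by simp [hrul])) (fun _ => ∅)
      ?_ ?_ ?_ ?_ ?_
    · intro i h
      exact absurd h (by simp [hrul])
    · intro i h
      exact absurd h (by simp [hrul])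
    · intro i h
      exact absurd h (by simp [hrul])
    · exact fun x hx => hx
    · exact fun x hx => Or.inl hx
  · have hne : (rulesFor P a).map (fun r => disjList ((bodyLits r).map
        (fun l => GGoal.lit l.compl (anc ++ [Lit.neg a])))) ≠ [] := by
      simpa using hrul
    obtain ⟨Dof, h1, h2, h3⟩ := mem_conjList hne hD
    have hch : ∀ i (h : i < (rulesFor P a).length),
        ∃ b : Lit α, b ∈ bodyLits ((rulesFor P a).get ⟨i, h⟩) ∧
          J P b.compl (anc ++ [Lit.neg a]) (Dof i) := by
      intro i h
      have := h1 i (by simpa using h)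
      rw [List.get_eq_getElem, List.getElem_map, mem_disjList] at this
      obtain ⟨g', hg', hDg⟩ := this
      obtain ⟨b, hb, rfl⟩ := List.mem_map.mp hg'
      exact ⟨b, hb, hDg⟩
    choose bof hbm hbJ using hch
    have h0 : 0 < (rulesFor P a).length := by
      cases hbl : rulesFor P a with
      | nil => exact absurd hbl hrul
      | cons _ _ => simp [hbl]
    refine J.expandNeg a anc D bof Dof hbm hbJ ?_ ?_ ?_
    · intro i h
      exact h2 i (by simpa using h)
    · intro x hx
      exact h2 0 (by simpa using h0) (J_mem (hbJ 0 h0) x (List.mem_append.mpr (Or.inl hx)))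
    · intro x hx
      obtain ⟨i, hi, hxi⟩ := h3 x hx
      exact Or.inr ⟨i, by simpa using hi, hxi⟩

/-- Soundness of the computed rules recorded in `Δ`. -/
def Dsound (P : List (PRule α)) (Δ : Lit α → Option (CRule α)) : Prop :=
  ∀ l Ds, Δ l = some (CRule.succ Ds) → ∀ D ∈ Ds, PreGoodSet P D ∧ l ∈ D

lemma step_ans {P : List (PRule α)} {Δ : Lit α → Option (CRule α)} (hds : Dsound P Δ)
    {g g' : GGoal α} (hst : GStepC P Δ g g') : GoalAns P g' ⊆ GoalAns P g := by
  induction hst with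
  | litPos a anc hΔ h => exact fun D hD => posExp_sound hD
  | litNeg a anc hΔ h => exact fun D hD => negExp_sound hD
  | compFail l anc hΔ h => exact fun D hD => absurd hD (Set.notMem_empty D)
  | lr1 l anc h => exact fun D hD => absurd hD (Set.notMem_empty D)
  | lr2 l anc h =>
    intro D hD
    rw [show GoalAns P (GGoal.T {x | x ∈ anc ++ [l]}) = {{x | x ∈ anc ++ [l]}} from rfl,
      Set.mem_singleton_iff.mp hD] at *
    exact J.loop l anc h
  | recycle l anc Ds hΔ h =>
    intro D hD
    rw [recycleRHS, mem_disjTT] at hD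
    obtain ⟨D₀, hD₀, rfl⟩ := List.mem_map.mp hD
    have hD₀' : D₀ ∈ Ds := List.mem_of_mem_filter hD₀
    obtain ⟨hpg, hlm⟩ := hds l Ds hΔ D₀ hD₀'
    exact J.ext l anc D₀ hlm hpg
  | sr1 g => exact fun D hD => Or.inr hD
  | sr1' g => exact fun D hD => Or.inl hD
  | sr2 g => exact fun D hD => absurd hD (Set.notMem_empty D)
  | sr2' g => exact fun D hD => absurd hD (Set.notMem_empty D)
  | sr3 C₁ C₂ h =>
    intro D hD
    exact ⟨C₁, rfl, C₂, rfl, Set.mem_singleton_iff.mp hD⟩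
  | sr4 C₁ C₂ h => exact fun D hD => absurd hD (Set.notMem_empty D)
  | sr5 g₁ g₂ g₃ =>
    rintro D (⟨D₁, h₁, D₂, h₂, rfl⟩ | ⟨D₁, h₁, D₂, h₂, rfl⟩)
    · exact ⟨D₁, h₁, D₂, Or.inl h₂, rfl⟩
    · exact ⟨D₁, h₁, D₂, Or.inr h₂, rfl⟩
  | sr5' g₁ g₂ g₃ =>
    rintro D (⟨D₁, h₁, D₂, h₂, rfl⟩ | ⟨D₁, h₁, D₂, h₂, rfl⟩)
    · exact ⟨D₁, Or.inl h₁, D₂, h₂, rfl⟩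
    · exact ⟨D₁, Or.inr h₁, D₂, h₂, rfl⟩
  | andL g g' h hst ih =>
    rintro D ⟨D₁, h₁, D₂, h₂, rfl⟩
    exact ⟨D₁, ih h₁, D₂, h₂, rfl⟩
  | andR g h h' hst ih =>
    rintro D ⟨D₁, h₁, D₂, h₂, rfl⟩
    exact ⟨D₁, h₁, D₂, ih h₂, rfl⟩
  | orL g g' h hst ih =>
    rintro D (hD | hD)
    · exact Or.inl (ih hD)
    · exact Or.inr hD
  | orR g h h' hst ih =>
    rintro D (hD | hD)
    · exact Or.inl hD
    · exact Or.inr (ih hD)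

end Goals

section Invariants
variable {α : Type} [DecidableEq α]

/-- All literal goals carry loop-checked chains. -/
def LOK : GGoal α → Prop
  | .lit _ anc => ChainOK anc
  | .and g h => LOK g ∧ LOK h
  | .or g h => LOK g ∧ LOK h
  | _ => True

/-- All `T` contexts occurring in a goal are consistent. -/
def TOK : GGoal α → Prop
  | .T D => ConsistentSet D
  | .and g h => TOK g ∧ TOK h
  | .or g h => TOK g ∧ TOK h
  | _ => True

lemma LOK_disjList {L : List (GGoal α)} (h : ∀ g ∈ L, LOK g) : LOK (disjList L) := by
  induction L with
  | nil => trivial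
  | cons g gs ih =>
    cases gs with
    | nil => exact h g (by simp)
    | cons g2 t =>
      exact ⟨h g (by simp), ih (fun g' hg' => h g' (by simp [hg']))⟩

lemma TOK_disjList {L : List (GGoal α)} (h : ∀ g ∈ L, TOK g) : TOK (disjList L) := by
  induction L with
  | nil => trivial
  | cons g gs ih =>
    cases gs with
    | nil => exact h g (by simp)
    | cons g2 t =>
      exact ⟨h g (by simp), ih (fun g' hg' => h g' (by simp [hg']))⟩

lemma LOK_conjList {anc : List (Lit α)} {L : List (GGoal α)} (h : ∀ g ∈ L, LOK g) :
    LOK (conjList anc L) := by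
  induction L with
  | nil => trivial
  | cons g gs ih =>
    cases gs with
    | nil => exact h g (by simp)
    | cons g2 t =>
      exact ⟨h g (by simp), ih (fun g' hg' => h g' (by simp [hg']))⟩

lemma TOK_conjList {anc : List (Lit α)} {L : List (GGoal α)}
    (hc : ConsistentSet {x | x ∈ anc}) (h : ∀ g ∈ L, TOK g) : TOK (conjList anc L) := by
  induction L with
  | nil => exact hc
  | cons g gs ih =>
    cases gs with
    | nil => exact h g (by simp)
    | cons g2 t =>
      exact ⟨h g (by simp), ih (fun g' hg' => h g' (by simp [hg']))⟩

lemma LOK_posExp {P : List (PRule α)} {a : α} {anc' : List (Lit α)} (h : ChainOK anc') :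
    LOK (posExp P anc' a) := by
  refine LOK_disjList ?_
  intro g hg
  obtain ⟨r, _, rfl⟩ := List.mem_map.mp hg
  refine LOK_conjList ?_
  intro g' hg'
  obtain ⟨l, _, rfl⟩ := List.mem_map.mp hg'
  exact h

lemma TOK_posExp {P : List (PRule α)} {a : α} {anc' : List (Lit α)}
    (h : ConsistentSet {x | x ∈ anc'}) : TOK (posExp P anc' a) := by
  refine TOK_disjList ?_
  intro g hg
  obtain ⟨r, _, rfl⟩ := List.mem_map.mp hg
  refine TOK_conjList h ?_
  intro g' hg'
  obtain ⟨l, _, rfl⟩ := List.mem_map.mp hg'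
  trivial

lemma LOK_negExp {P : List (PRule α)} {a : α} {anc' : List (Lit α)} (h : ChainOK anc') :
    LOK (negExp P anc' a) := by
  refine LOK_conjList ?_
  intro g hg
  obtain ⟨r, _, rfl⟩ := List.mem_map.mp hg
  refine LOK_disjList ?_
  intro g' hg'
  obtain ⟨l, _, rfl⟩ := List.mem_map.mp hg'
  exact h

lemma TOK_negExp {P : List (PRule α)} {a : α} {anc' : List (Lit α)}
    (h : ConsistentSet {x | x ∈ anc'}) : TOK (negExp P anc' a) := by
  refine TOK_conjList h ?_
  intro g hg
  obtain ⟨r, _, rfl⟩ := List.mem_map.mp hg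
  refine TOK_disjList ?_
  intro g' hg'
  obtain ⟨l, _, rfl⟩ := List.mem_map.mp hg'
  trivial

lemma lr2_consistent {anc : List (Lit α)} {l : Lit α} (hok : ChainOK anc)
    (hsl : SuccLoopChain (anc ++ [l])) : ConsistentSet {x | x ∈ anc ++ [l]} := by
  have hmem : l ∈ anc := succ_mem hsl
  have : {x : Lit α | x ∈ anc ++ [l]} = {x | x ∈ anc} := by
    ext x
    simp only [Set.mem_setOf_eq, List.mem_append, List.mem_singleton]
    constructor
    · rintro (h | rfl)
      · exact h
      · exact hmem
    · exact Or.inl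
  rw [this]
  exact chainOK_consistent hok

lemma step_pres {P : List (PRule α)} {Δ : Lit α → Option (CRule α)} {g g' : GGoal α}
    (hst : GStepC P Δ g g') (hl : LOK g) (ht : TOK g) : LOK g' ∧ TOK g' := by
  induction hst with
  | litPos a anc hΔ h =>
    have hok : ChainOK (anc ++ [Lit.pos a]) := chainOK_concat hl h
    exact ⟨LOK_posExp hok, TOK_posExp (chainOK_consistent hok)⟩
  | litNeg a anc hΔ h =>
    have hok : ChainOK (anc ++ [Lit.neg a]) := chainOK_concat hl h
    exact ⟨LOK_negExp hok, TOK_negExp (chainOK_consistent hok)⟩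
  | compFail l anc hΔ h => exact ⟨trivial, trivial⟩
  | lr1 l anc h => exact ⟨trivial, trivial⟩
  | lr2 l anc h => exact ⟨trivial, lr2_consistent hl h⟩
  | recycle l anc Ds hΔ h =>
    refine ⟨LOK_disjList ?_, TOK_disjList ?_⟩
    · intro g hg
      obtain ⟨C, _, rfl⟩ := List.mem_map.mp hg
      trivial
    · intro g hg
      obtain ⟨C, hC, rfl⟩ := List.mem_map.mp hg
      obtain ⟨D₀, hD₀, rfl⟩ := List.mem_map.mp hC
      have hcc := List.of_mem_filter hD₀
      show ConsistentSet ({x | x ∈ anc ++ [l]} ∪ D₀)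
      exact @of_decide_eq_true _ (Classical.propDecidable _) hcc
  | sr1 g => exact ⟨hl.2, ht.2⟩
  | sr1' g => exact ⟨hl.1, ht.1⟩
  | sr2 g => exact ⟨trivial, trivial⟩
  | sr2' g => exact ⟨trivial, trivial⟩
  | sr3 C₁ C₂ h => exact ⟨trivial, h⟩
  | sr4 C₁ C₂ h => exact ⟨trivial, trivial⟩
  | sr5 g₁ g₂ g₃ =>
    exact ⟨⟨⟨hl.1, hl.2.1⟩, ⟨hl.1, hl.2.2⟩⟩, ⟨⟨ht.1, ht.2.1⟩, ⟨ht.1, ht.2.2⟩⟩⟩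
  | sr5' g₁ g₂ g₃ =>
    exact ⟨⟨⟨hl.1.1, hl.2⟩, ⟨hl.1.2, hl.2⟩⟩, ⟨⟨ht.1.1, ht.2⟩, ⟨ht.1.2, ht.2⟩⟩⟩
  | andL g g' h hst ih =>
    obtain ⟨h1, h2⟩ := ih hl.1 ht.1
    exact ⟨⟨h1, hl.2⟩, ⟨h2, ht.2⟩⟩
  | andR g h h' hst ih =>
    obtain ⟨h1, h2⟩ := ih hl.2 ht.2
    exact ⟨⟨hl.1, h1⟩, ⟨ht.1, h2⟩⟩
  | orL g g' h hst ih =>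
    obtain ⟨h1, h2⟩ := ih hl.1 ht.1
    exact ⟨⟨h1, hl.2⟩, ⟨h2, ht.2⟩⟩
  | orR g h h' hst ih =>
    obtain ⟨h1, h2⟩ := ih hl.2 ht.2
    exact ⟨⟨hl.1, h1⟩, ⟨ht.1, h2⟩⟩

end Invariants

section Assembly
variable {α : Type} [DecidableEq α]

lemma singleton_split {β : Type} {x y : β} {xs ys : List β} (h : [x] = xs ++ y :: ys) :
    xs = [] ∧ ys = [] ∧ x = y := by
  cases xs with
  | nil =>
    injection h with h1 h2
    exact ⟨rfl, h2.symm, h1⟩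
  | cons a t =>
    injection h with h1 h2
    exact absurd h2.symm (by simp)

lemma steps_sound {P : List (PRule α)} {Δ : Lit α → Option (CRule α)} (hds : Dsound P Δ)
    {g g' : GGoal α} (hst : GStepsC P Δ g g') (hl : LOK g) (ht : TOK g) :
    LOK g' ∧ TOK g' ∧ GoalAns P g' ⊆ GoalAns P g := by
  have hst' : Relation.ReflTransGen (GStepC P Δ) g g' := hst
  clear hst
  induction hst' with
  | refl => exact ⟨hl, ht, subset_rfl⟩
  | tail hs hstep ih =>
    obtain ⟨h1, h2, h3⟩ := ih
    obtain ⟨h4, h5⟩ := step_pres hstep h1 h2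
    exact ⟨h4, h5, (step_ans hds hstep).trans h3⟩

lemma TOK_disjTT {Cs : List (Set (Lit α))} (h : TOK (disjTT Cs)) :
    ∀ C ∈ Cs, ConsistentSet C := by
  induction Cs with
  | nil => intro C hC; exact absurd hC List.not_mem_nil
  | cons C0 t ih =>
    intro C hC
    cases t with
    | nil =>
      rcases List.mem_singleton.mp hC with rfl
      exact h
    | cons C1 t' =>
      rcases List.mem_cons.mp hC with rfl | hC'
      · exact h.1
      · exact ih h.2 C hC'

lemma derivation_closed {P : List (PRule α)} {Δ : Lit α → Option (CRule α)}
    (hds : Dsound P Δ) {g : Lit α} {Cs : List (Set (Lit α))}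
    (hder : GStepsC P Δ (initGoal g) (disjTT Cs)) :
    ∀ C ∈ Cs, ConsistentSet C ∧ g ∈ C ∧ PreGoodSet P C := by
  have hl : LOK (initGoal g) := chainOK_nil
  have ht : TOK (initGoal g) := trivial
  obtain ⟨hl', ht', hans⟩ := steps_sound hds hder hl ht
  intro C hC
  have hJ : J P g [] C := hans (mem_disjTT.mpr hC)
  have hcons : ConsistentSet C := TOK_disjTT ht' C hC
  have hgC : g ∈ C := J_self_mem hJ
  have hn : HNeg P [] C := fun a ha => absurd ha List.not_mem_nil
  have hpo : HPo P ([] ++ [g]) C := by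
    intro xs p ys heq hex
    obtain ⟨_, rfl, _⟩ := singleton_split heq
    obtain ⟨y, hy, _⟩ := hex
    exact absurd hy List.not_mem_nil
  have hpr : HPr P ([] ++ [g]) C := by
    intro xs p ys heq hall q hq hder'
    obtain ⟨_, _, hg⟩ := singleton_split heq
    have hq' : g = Lit.pos q := by
      rw [show ([] ++ [g] : List (Lit α)).getLast? = some g from rfl] at hq
      exact Option.some.inj hq
    have hpq : p = q := Lit.pos.inj (hg.symm.trans hq')
    rwa [hpq]
  obtain ⟨part1, part2⟩ := J_main hJ C subset_rfl hn hpo hpr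
  refine ⟨hcons, hgC, ?_, part2⟩
  intro a ha
  rcases part1 a ha with hd | hrun
  · exact hd
  · obtain ⟨xs, ys, heq, _⟩ := hrun
    obtain ⟨_, _, hg⟩ := singleton_split heq
    exact J_self hJ C subset_rfl hpo a hg

lemma valid_sound {P : List (PRule α)} {Δ : Lit α → Option (CRule α)}
    (h : ValidSystem P Δ) : Dsound P Δ := by
  induction h with
  | base => intro l Ds h'; exact absurd h' (by simp)
  | step Δ Δ' hvs hrepl ih =>
    intro l Ds hΔ'
    rcases hrepl l with heq | ⟨cr, hcr, hic⟩
    · rw [heq] at hΔ'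
      exact ih l Ds hΔ'
    · rw [hΔ'] at hcr
      have hcr' : CRule.succ Ds = cr := Option.some.inj hcr
      rw [← hcr'] at hic
      obtain ⟨hne, hder⟩ := hic
      intro D hD
      have hres := derivation_closed ih hder D hD
      exact ⟨hres.2.2, hres.2.1⟩

end Assembly
/-- Soundness of recycling: for every `i ≥ 0`, the rewrite system `R^i_P`
is sound: for any literal `g` and any rewrite sequence
`g →_{R^i} T(C₁) ∨ … ∨ T(Cₙ)`, and for each `C_j` (`j ∈ [1..n]`), there exists a
partial stable model `M` of `P` such that `g ∈ C_j ⊆ M`. -/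
theorem recycling_sound {α : Type} [DecidableEq α] (P : List (PRule α))
    (Δ : Lit α → Option (CRule α)) (hΔ : ValidSystem P Δ)
    (g : Lit α) (Cs : List (Set (Lit α))) (hne : Cs ≠ [])
    (h : GStepsC P Δ (initGoal g) (disjTT Cs)) :
    ∀ C ∈ Cs, ∃ M : Set (Lit α), IsPSM P M ∧ g ∈ C ∧ C ⊆ M := by
  have hds : Dsound P Δ := valid_sound hΔ
  intro C hC
  obtain ⟨hcons, hgC, hpg⟩ := derivation_closed hds h C hC
  obtain ⟨M, hM, hCM⟩ := key_psm P C hcons hpg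
  exact ⟨M, hM, hgC, hCM⟩
end
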